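/- arXiv:2010.06162 — 3 statements merged into one kernel-verified Lean document; each statement's English description precedes it below -/
import Mathlib

section
/- Mobility property for tied pseudo braids: for every n ≥ 2, every element α of the tied pseudo braid monoid TPM_n can be written as α = γ β, where γ lies in the submonoid of TPM_n generated by the elements σ_1,…,σ_{n−1}, σ_1⁻¹,…,σ_{n−1}⁻¹, p_1,…,p_{n−1} and β lies in the submonoid of TPM_n generated by the generalized ties η_{i,j} for 1 ≤ i < j ≤ n. -/
/-!
The tied pseudo braid monoid `TPM n` (n ≥ 2), presented by generators
σ_1,…,σ_{n−1}, σ_1⁻¹,…,σ_{n−1}⁻¹, p_1,…,p_{n−1}, η_1,…,η_{n−1} subject to the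
relations listed in the inductive `TPMRel` below.
-/

/-- Generators of the tied pseudo braid monoid: σ_i, σ_i⁻¹, p_i and η_i for 1 ≤ i ≤ n−1. -/
inductive TPMGen (n : ℕ) : Type
  | sig (i : ℕ) (h : 1 ≤ i ∧ i ≤ n - 1) : TPMGen n
  | sigInv (i : ℕ) (h : 1 ≤ i ∧ i ≤ n - 1) : TPMGen n
  | p (i : ℕ) (h : 1 ≤ i ∧ i ≤ n - 1) : TPMGen n
  | eta (i : ℕ) (h : 1 ≤ i ∧ i ≤ n - 1) : TPMGen n

/-- The word σ_i in the free monoid on the generators. -/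
def wS (n i : ℕ) : FreeMonoid (TPMGen n) :=
  if h : 1 ≤ i ∧ i ≤ n - 1 then FreeMonoid.of (TPMGen.sig i h) else 1

/-- The word σ_i⁻¹ in the free monoid on the generators. -/
def wSI (n i : ℕ) : FreeMonoid (TPMGen n) :=
  if h : 1 ≤ i ∧ i ≤ n - 1 then FreeMonoid.of (TPMGen.sigInv i h) else 1

/-- The word p_i in the free monoid on the generators. -/
def wP (n i : ℕ) : FreeMonoid (TPMGen n) :=
  if h : 1 ≤ i ∧ i ≤ n - 1 then FreeMonoid.of (TPMGen.p i h) else 1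

/-- The word η_i in the free monoid on the generators. -/
def wE (n i : ℕ) : FreeMonoid (TPMGen n) :=
  if h : 1 ≤ i ∧ i ≤ n - 1 then FreeMonoid.of (TPMGen.eta i h) else 1

/-- The defining relations of the tied pseudo braid monoid `TPM n`. -/
inductive TPMRel (n : ℕ) : FreeMonoid (TPMGen n) → FreeMonoid (TPMGen n) → Prop
  /- σ_i σ_i⁻¹ = σ_i⁻¹ σ_i = 1 -/
  | inv_right (i : ℕ) (h : 1 ≤ i ∧ i ≤ n - 1) :
      TPMRel n (wS n i * wSI n i) 1
  | inv_left (i : ℕ) (h : 1 ≤ i ∧ i ≤ n - 1) :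
      TPMRel n (wSI n i * wS n i) 1
  /- σ_i σ_{i+1} σ_i = σ_{i+1} σ_i σ_{i+1} -/
  | braid (i : ℕ) (h : 1 ≤ i ∧ i + 1 ≤ n - 1) :
      TPMRel n (wS n i * wS n (i+1) * wS n i) (wS n (i+1) * wS n i * wS n (i+1))
  /- σ_i σ_j = σ_j σ_i for |i−j| ≥ 2 -/
  | sig_comm (i j : ℕ) (hi : 1 ≤ i ∧ i ≤ n - 1) (hj : 1 ≤ j ∧ j ≤ n - 1)
      (hij : i + 2 ≤ j ∨ j + 2 ≤ i) :
      TPMRel n (wS n i * wS n j) (wS n j * wS n i)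
  /- p_i p_j = p_j p_i for |i−j| ≥ 2 -/
  | p_comm (i j : ℕ) (hi : 1 ≤ i ∧ i ≤ n - 1) (hj : 1 ≤ j ∧ j ≤ n - 1)
      (hij : i + 2 ≤ j ∨ j + 2 ≤ i) :
      TPMRel n (wP n i * wP n j) (wP n j * wP n i)
  /- p_i σ_j^{±1} = σ_j^{±1} p_i for |i−j| ≥ 2 -/
  | p_sig_far_pos (i j : ℕ) (hi : 1 ≤ i ∧ i ≤ n - 1) (hj : 1 ≤ j ∧ j ≤ n - 1)
      (hij : i + 2 ≤ j ∨ j + 2 ≤ i) :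
      TPMRel n (wP n i * wS n j) (wS n j * wP n i)
  | p_sig_far_neg (i j : ℕ) (hi : 1 ≤ i ∧ i ≤ n - 1) (hj : 1 ≤ j ∧ j ≤ n - 1)
      (hij : i + 2 ≤ j ∨ j + 2 ≤ i) :
      TPMRel n (wP n i * wSI n j) (wSI n j * wP n i)
  /- p_i σ_i^{±1} = σ_i^{±1} p_i -/
  | p_sig_pos (i : ℕ) (h : 1 ≤ i ∧ i ≤ n - 1) :
      TPMRel n (wP n i * wS n i) (wS n i * wP n i)
  | p_sig_neg (i : ℕ) (h : 1 ≤ i ∧ i ≤ n - 1) :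
      TPMRel n (wP n i * wSI n i) (wSI n i * wP n i)
  /- σ_i σ_{i+1} p_i = p_{i+1} σ_i σ_{i+1} -/
  | ssp (i : ℕ) (h : 1 ≤ i ∧ i + 1 ≤ n - 1) :
      TPMRel n (wS n i * wS n (i+1) * wP n i) (wP n (i+1) * wS n i * wS n (i+1))
  /- σ_{i+1} σ_i p_{i+1} = p_i σ_{i+1} σ_i -/
  | ssp' (i : ℕ) (h : 1 ≤ i ∧ i + 1 ≤ n - 1) :
      TPMRel n (wS n (i+1) * wS n i * wP n (i+1)) (wP n i * wS n (i+1) * wS n i)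
  /- η_i η_j = η_j η_i for all i, j -/
  | eta_comm (i j : ℕ) (hi : 1 ≤ i ∧ i ≤ n - 1) (hj : 1 ≤ j ∧ j ≤ n - 1) :
      TPMRel n (wE n i * wE n j) (wE n j * wE n i)
  /- η_i σ_i = σ_i η_i -/
  | eta_sig (i : ℕ) (h : 1 ≤ i ∧ i ≤ n - 1) :
      TPMRel n (wE n i * wS n i) (wS n i * wE n i)
  /- η_i σ_j = σ_j η_i for |i−j| ≥ 2 -/
  | eta_sig_far (i j : ℕ) (hi : 1 ≤ i ∧ i ≤ n - 1) (hj : 1 ≤ j ∧ j ≤ n - 1)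
      (hij : i + 2 ≤ j ∨ j + 2 ≤ i) :
      TPMRel n (wE n i * wS n j) (wS n j * wE n i)
  /- η_i σ_j σ_i^ε = σ_j σ_i^ε η_j for |i−j| = 1, ε = ±1 -/
  | eta_slide_pos (i j : ℕ) (hi : 1 ≤ i ∧ i ≤ n - 1) (hj : 1 ≤ j ∧ j ≤ n - 1)
      (hij : j = i + 1 ∨ i = j + 1) :
      TPMRel n (wE n i * wS n j * wS n i) (wS n j * wS n i * wE n j)
  | eta_slide_neg (i j : ℕ) (hi : 1 ≤ i ∧ i ≤ n - 1) (hj : 1 ≤ j ∧ j ≤ n - 1)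
      (hij : j = i + 1 ∨ i = j + 1) :
      TPMRel n (wE n i * wS n j * wSI n i) (wS n j * wSI n i * wE n j)
  /- η_i η_j σ_i = η_j σ_i η_j = σ_i η_i η_j for |i−j| = 1 -/
  | eta_eta_sig₁ (i j : ℕ) (hi : 1 ≤ i ∧ i ≤ n - 1) (hj : 1 ≤ j ∧ j ≤ n - 1)
      (hij : j = i + 1 ∨ i = j + 1) :
      TPMRel n (wE n i * wE n j * wS n i) (wE n j * wS n i * wE n j)
  | eta_eta_sig₂ (i j : ℕ) (hi : 1 ≤ i ∧ i ≤ n - 1) (hj : 1 ≤ j ∧ j ≤ n - 1)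
      (hij : j = i + 1 ∨ i = j + 1) :
      TPMRel n (wE n j * wS n i * wE n j) (wS n i * wE n i * wE n j)
  /- η_i² = η_i -/
  | eta_idem (i : ℕ) (h : 1 ≤ i ∧ i ≤ n - 1) :
      TPMRel n (wE n i * wE n i) (wE n i)
  /- p_i η_i = η_i p_i -/
  | p_eta (i : ℕ) (h : 1 ≤ i ∧ i ≤ n - 1) :
      TPMRel n (wP n i * wE n i) (wE n i * wP n i)
  /- p_i η_j = η_j p_i for |i−j| ≥ 2 -/
  | p_eta_far (i j : ℕ) (hi : 1 ≤ i ∧ i ≤ n - 1) (hj : 1 ≤ j ∧ j ≤ n - 1)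
      (hij : i + 2 ≤ j ∨ j + 2 ≤ i) :
      TPMRel n (wP n i * wE n j) (wE n j * wP n i)
  /- η_i p_j p_i = p_j p_i η_j for |i−j| = 1 -/
  | eta_pp (i j : ℕ) (hi : 1 ≤ i ∧ i ≤ n - 1) (hj : 1 ≤ j ∧ j ≤ n - 1)
      (hij : j = i + 1 ∨ i = j + 1) :
      TPMRel n (wE n i * wP n j * wP n i) (wP n j * wP n i * wE n j)
  /- η_i η_j p_i = η_j p_i η_j = p_i η_i η_j for |i−j| = 1 -/
  | eta_eta_p₁ (i j : ℕ) (hi : 1 ≤ i ∧ i ≤ n - 1) (hj : 1 ≤ j ∧ j ≤ n - 1)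
      (hij : j = i + 1 ∨ i = j + 1) :
      TPMRel n (wE n i * wE n j * wP n i) (wE n j * wP n i * wE n j)
  | eta_eta_p₂ (i j : ℕ) (hi : 1 ≤ i ∧ i ≤ n - 1) (hj : 1 ≤ j ∧ j ≤ n - 1)
      (hij : j = i + 1 ∨ i = j + 1) :
      TPMRel n (wE n j * wP n i * wE n j) (wP n i * wE n i * wE n j)
  /- η_i p_j σ_i = p_j σ_i η_j for |i−j| = 1 -/
  | eta_ps (i j : ℕ) (hi : 1 ≤ i ∧ i ≤ n - 1) (hj : 1 ≤ j ∧ j ≤ n - 1)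
      (hij : j = i + 1 ∨ i = j + 1) :
      TPMRel n (wE n i * wP n j * wS n i) (wP n j * wS n i * wE n j)
  /- η_i σ_j p_i = σ_j p_i η_j for |i−j| = 1 -/
  | eta_sp (i j : ℕ) (hi : 1 ≤ i ∧ i ≤ n - 1) (hj : 1 ≤ j ∧ j ≤ n - 1)
      (hij : j = i + 1 ∨ i = j + 1) :
      TPMRel n (wE n i * wS n j * wP n i) (wS n j * wP n i * wE n j)
  /- p_i η_j = σ_i η_j σ_i⁻¹ p_i for |i−j| = 1 -/
  | p_eta_conj (i j : ℕ) (hi : 1 ≤ i ∧ i ≤ n - 1) (hj : 1 ≤ j ∧ j ≤ n - 1)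
      (hij : j = i + 1 ∨ i = j + 1) :
      TPMRel n (wP n i * wE n j) (wS n i * wE n j * wSI n i * wP n i)

/-- The tied pseudo braid monoid `TPM n`: the quotient of the free monoid on the
generators by the congruence generated by the defining relations. -/
def TPM (n : ℕ) := (conGen (TPMRel n)).Quotient

instance (n : ℕ) : Monoid (TPM n) :=
  inferInstanceAs (Monoid ((conGen (TPMRel n)).Quotient))

/-- The generator σ_i of `TPM n` (defined for 1 ≤ i ≤ n−1; junk value 1 otherwise). -/
def TPM.s (n i : ℕ) : TPM n := (conGen (TPMRel n)).mk' (wS n i)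

/-- The generator σ_i⁻¹ of `TPM n` (defined for 1 ≤ i ≤ n−1; junk value 1 otherwise). -/
def TPM.sInv (n i : ℕ) : TPM n := (conGen (TPMRel n)).mk' (wSI n i)

/-- The generator p_i of `TPM n` (defined for 1 ≤ i ≤ n−1; junk value 1 otherwise). -/
def TPM.p (n i : ℕ) : TPM n := (conGen (TPMRel n)).mk' (wP n i)

/-- The generator η_i of `TPM n` (defined for 1 ≤ i ≤ n−1; junk value 1 otherwise). -/
def TPM.e (n i : ℕ) : TPM n := (conGen (TPMRel n)).mk' (wE n i)

/-- The generalized tie η_{i,j} = σ_i σ_{i+1} ⋯ σ_{j−2} η_{j−1} σ_{j−2}⁻¹ ⋯ σ_{i+1}⁻¹ σ_i⁻¹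
in `TPM n`, for 1 ≤ i < j ≤ n (in particular η_{i,i+1} = η_i). -/
def TPM.genTie (n i j : ℕ) : TPM n :=
  (((List.range' i (j - 1 - i)).map (TPM.s n)).prod) * TPM.e n (j - 1) *
    (((List.range' i (j - 1 - i)).reverse.map (TPM.sInv n)).prod)

namespace TPMAux

variable {n : ℕ}

/-- Lift a defining relation to an equality in the quotient monoid. -/
theorem req {a b : FreeMonoid (TPMGen n)} (h : TPMRel n a b) :
    (conGen (TPMRel n)).mk' a = (conGen (TPMRel n)).mk' b :=
  ((conGen (TPMRel n)).eq).2 (ConGen.Rel.of a b h)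

/-- local abbreviations -/
local notation "S" => TPM.s n
local notation "SI" => TPM.sInv n
local notation "P" => TPM.p n
local notation "E" => TPM.e n

theorem lift2 {a b c d : FreeMonoid (TPMGen n)} (h : TPMRel n (a * b) (c * d)) :
    (conGen (TPMRel n)).mk' a * (conGen (TPMRel n)).mk' b =
      (conGen (TPMRel n)).mk' c * (conGen (TPMRel n)).mk' d := by
  simpa [map_mul] using req h

theorem lift21 {a b : FreeMonoid (TPMGen n)} (h : TPMRel n (a * b) 1) :
    (conGen (TPMRel n)).mk' a * (conGen (TPMRel n)).mk' b = 1 := by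
  simpa [map_mul, map_one] using req h

theorem lift33 {a b c d e f : FreeMonoid (TPMGen n)} (h : TPMRel n (a * b * c) (d * e * f)) :
    (conGen (TPMRel n)).mk' a * (conGen (TPMRel n)).mk' b * (conGen (TPMRel n)).mk' c =
      (conGen (TPMRel n)).mk' d * (conGen (TPMRel n)).mk' e * (conGen (TPMRel n)).mk' f := by
  simpa [map_mul] using req h

theorem lift24 {a b c d e f : FreeMonoid (TPMGen n)} (h : TPMRel n (a * b) (c * d * e * f)) :
    (conGen (TPMRel n)).mk' a * (conGen (TPMRel n)).mk' b =
      (conGen (TPMRel n)).mk' c * (conGen (TPMRel n)).mk' d * (conGen (TPMRel n)).mk' e *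
        (conGen (TPMRel n)).mk' f := by
  simpa [map_mul] using req h

-- Lifted defining relations
theorem s_si (i : ℕ) (h : 1 ≤ i ∧ i ≤ n - 1) : S i * SI i = 1 :=
  lift21 (TPMRel.inv_right i h)

theorem si_s (i : ℕ) (h : 1 ≤ i ∧ i ≤ n - 1) : SI i * S i = 1 :=
  lift21 (TPMRel.inv_left i h)

theorem braid (i : ℕ) (h : 1 ≤ i ∧ i + 1 ≤ n - 1) :
    S i * S (i+1) * S i = S (i+1) * S i * S (i+1) :=
  lift33 (TPMRel.braid i h)

theorem s_comm (i j : ℕ) (hi : 1 ≤ i ∧ i ≤ n - 1) (hj : 1 ≤ j ∧ j ≤ n - 1)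
    (hij : i + 2 ≤ j ∨ j + 2 ≤ i) : S i * S j = S j * S i :=
  lift2 (TPMRel.sig_comm i j hi hj hij)

theorem p_s_far (i j : ℕ) (hi : 1 ≤ i ∧ i ≤ n - 1) (hj : 1 ≤ j ∧ j ≤ n - 1)
    (hij : i + 2 ≤ j ∨ j + 2 ≤ i) : P i * S j = S j * P i :=
  lift2 (TPMRel.p_sig_far_pos i j hi hj hij)

theorem p_si_far (i j : ℕ) (hi : 1 ≤ i ∧ i ≤ n - 1) (hj : 1 ≤ j ∧ j ≤ n - 1)
    (hij : i + 2 ≤ j ∨ j + 2 ≤ i) : P i * SI j = SI j * P i :=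
  lift2 (TPMRel.p_sig_far_neg i j hi hj hij)

theorem p_s (i : ℕ) (h : 1 ≤ i ∧ i ≤ n - 1) : P i * S i = S i * P i :=
  lift2 (TPMRel.p_sig_pos i h)

theorem p_si (i : ℕ) (h : 1 ≤ i ∧ i ≤ n - 1) : P i * SI i = SI i * P i :=
  lift2 (TPMRel.p_sig_neg i h)

theorem ssp (i : ℕ) (h : 1 ≤ i ∧ i + 1 ≤ n - 1) :
    S i * S (i+1) * P i = P (i+1) * S i * S (i+1) :=
  lift33 (TPMRel.ssp i h)

theorem e_s (i : ℕ) (h : 1 ≤ i ∧ i ≤ n - 1) : E i * S i = S i * E i :=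
  lift2 (TPMRel.eta_sig i h)

theorem e_s_far (i j : ℕ) (hi : 1 ≤ i ∧ i ≤ n - 1) (hj : 1 ≤ j ∧ j ≤ n - 1)
    (hij : i + 2 ≤ j ∨ j + 2 ≤ i) : E i * S j = S j * E i :=
  lift2 (TPMRel.eta_sig_far i j hi hj hij)

theorem e_slide_pos (i j : ℕ) (hi : 1 ≤ i ∧ i ≤ n - 1) (hj : 1 ≤ j ∧ j ≤ n - 1)
    (hij : j = i + 1 ∨ i = j + 1) : E i * S j * S i = S j * S i * E j :=
  lift33 (TPMRel.eta_slide_pos i j hi hj hij)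

theorem e_slide_neg (i j : ℕ) (hi : 1 ≤ i ∧ i ≤ n - 1) (hj : 1 ≤ j ∧ j ≤ n - 1)
    (hij : j = i + 1 ∨ i = j + 1) : E i * S j * SI i = S j * SI i * E j :=
  lift33 (TPMRel.eta_slide_neg i j hi hj hij)

theorem p_e (i : ℕ) (h : 1 ≤ i ∧ i ≤ n - 1) : P i * E i = E i * P i :=
  lift2 (TPMRel.p_eta i h)

theorem p_e_far (i j : ℕ) (hi : 1 ≤ i ∧ i ≤ n - 1) (hj : 1 ≤ j ∧ j ≤ n - 1)
    (hij : i + 2 ≤ j ∨ j + 2 ≤ i) : P i * E j = E j * P i :=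
  lift2 (TPMRel.p_eta_far i j hi hj hij)

theorem p_e_conj (i j : ℕ) (hi : 1 ≤ i ∧ i ≤ n - 1) (hj : 1 ≤ j ∧ j ≤ n - 1)
    (hij : j = i + 1 ∨ i = j + 1) : P i * E j = S i * E j * SI i * P i :=
  lift24 (TPMRel.p_eta_conj i j hi hj hij)

-- generic manipulation helpers
theorem lcancel {a b : TPM n} (hab : a * b = 1) {x y : TPM n} (h : b * x = b * y) : x = y := by
  have := congrArg (a * ·) h
  simpa [← mul_assoc, hab] using this

theorem rcancel {a b : TPM n} (hab : a * b = 1) {x y : TPM n} (h : x * a = y * a) : x = y := by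
  have := congrArg (· * b) h
  simpa [mul_assoc, hab] using this

theorem fold {A B T T' : TPM n} (h : A * T = T' * A) (hAB : A * B = 1) : A * T * B = T' := by
  rw [h, mul_assoc, hAB, mul_one]

theorem flip {A B T T' : TPM n} (hAB : A * B = 1) (hBA : B * A = 1)
    (h : A * T = T' * A) : T * B = B * T' := by
  calc T * B = (B * A) * T * B := by rw [hBA, one_mul]
    _ = B * (A * T) * B := by rw [mul_assoc B A T]
    _ = B * (T' * A) * B := by rw [h]
    _ = (B * T') * (A * B) := by rw [← mul_assoc B T' A, mul_assoc (B * T') A B]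
    _ = B * T' := by rw [hAB, mul_one]

theorem comm_flip {a b x : TPM n} (hab : a * b = 1) (hba : b * a = 1)
    (h : x * a = a * x) : x * b = b * x :=
  flip hab hba h.symm

theorem swap3 {a b : TPM n} (h : a * b = b * a) (x : TPM n) : a * (b * x) = b * (a * x) := by
  rw [← mul_assoc, h, mul_assoc]

-- derived commutations
theorem si_e (i : ℕ) (h : 1 ≤ i ∧ i ≤ n - 1) : E i * SI i = SI i * E i :=
  comm_flip (s_si i h) (si_s i h) (e_s i h)

theorem si_e_far (i j : ℕ) (hi : 1 ≤ i ∧ i ≤ n - 1) (hj : 1 ≤ j ∧ j ≤ n - 1)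
    (hij : i + 2 ≤ j ∨ j + 2 ≤ i) : E i * SI j = SI j * E i :=
  comm_flip (s_si j hj) (si_s j hj) (e_s_far i j hi hj hij)

theorem si_s_comm (i j : ℕ) (hi : 1 ≤ i ∧ i ≤ n - 1) (hj : 1 ≤ j ∧ j ≤ n - 1)
    (hij : i + 2 ≤ j ∨ j + 2 ≤ i) : S i * SI j = SI j * S i :=
  comm_flip (s_si j hj) (si_s j hj) (s_comm i j hi hj hij)

theorem si_si_comm (i j : ℕ) (hi : 1 ≤ i ∧ i ≤ n - 1) (hj : 1 ≤ j ∧ j ≤ n - 1)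
    (hij : i + 2 ≤ j ∨ j + 2 ≤ i) : SI i * SI j = SI j * SI i :=
  comm_flip (s_si j hj) (si_s j hj) (si_s_comm j i hj hi (hij.symm)).symm

-- braid variants for the pair (i, i+1); u = S i, v = S (i+1)
theorem braid_B2 (i : ℕ) (hi : 1 ≤ i ∧ i + 1 ≤ n - 1) :
    SI (i+1) * S i * S (i+1) = S i * S (i+1) * SI i := by
  have hu : (1 ≤ i ∧ i ≤ n - 1) := ⟨hi.1, by omega⟩
  have hv : (1 ≤ i + 1 ∧ i + 1 ≤ n - 1) := ⟨by omega, hi.2⟩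
  apply rcancel (s_si i hu)
  calc SI (i+1) * S i * S (i+1) * S i = SI (i+1) * (S i * S (i+1) * S i) := by
        simp [mul_assoc]
    _ = SI (i+1) * (S (i+1) * S i * S (i+1)) := by rw [braid i hi]
    _ = (SI (i+1) * S (i+1)) * (S i * S (i+1)) := by simp [mul_assoc]
    _ = S i * S (i+1) := by rw [si_s (i+1) hv, one_mul]
    _ = S i * S (i+1) * (SI i * S i) := by rw [si_s i hu, mul_one]
    _ = S i * S (i+1) * SI i * S i := by simp [mul_assoc]

theorem braid_B5 (i : ℕ) (hi : 1 ≤ i ∧ i + 1 ≤ n - 1) :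
    S (i+1) * S i * SI (i+1) = SI i * S (i+1) * S i := by
  have hu : (1 ≤ i ∧ i ≤ n - 1) := ⟨hi.1, by omega⟩
  have hv : (1 ≤ i + 1 ∧ i + 1 ≤ n - 1) := ⟨by omega, hi.2⟩
  apply rcancel (s_si (i+1) hv)
  calc S (i+1) * S i * SI (i+1) * S (i+1) = S (i+1) * S i * (SI (i+1) * S (i+1)) := by
        simp [mul_assoc]
    _ = S (i+1) * S i := by rw [si_s (i+1) hv, mul_one]
    _ = (SI i * S i) * (S (i+1) * S i) := by rw [si_s i hu, one_mul]
    _ = SI i * (S i * S (i+1) * S i) := by simp [mul_assoc]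
    _ = SI i * (S (i+1) * S i * S (i+1)) := by rw [braid i hi]
    _ = SI i * S (i+1) * S i * S (i+1) := by simp [mul_assoc]

theorem braid_B3 (i : ℕ) (hi : 1 ≤ i ∧ i + 1 ≤ n - 1) :
    SI (i+1) * SI i * SI (i+1) = SI i * SI (i+1) * SI i := by
  have hu : (1 ≤ i ∧ i ≤ n - 1) := ⟨hi.1, by omega⟩
  have hv : (1 ≤ i + 1 ∧ i + 1 ≤ n - 1) := ⟨by omega, hi.2⟩
  have key : ∀ X : TPM n, X = SI (i+1) * SI i * SI (i+1) ∨ X = SI i * SI (i+1) * SI i →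
      True := fun _ _ => trivial
  have h1 : SI (i+1) * SI i * SI (i+1) * (S (i+1) * S i * S (i+1)) = 1 := by
    calc SI (i+1) * SI i * SI (i+1) * (S (i+1) * S i * S (i+1))
        = SI (i+1) * SI i * ((SI (i+1) * S (i+1)) * S i) * S (i+1) := by simp [mul_assoc]
      _ = SI (i+1) * ((SI i * S i) * S (i+1)) := by rw [si_s (i+1) hv]; simp [mul_assoc]
      _ = SI (i+1) * S (i+1) := by rw [si_s i hu, one_mul]
      _ = 1 := si_s (i+1) hv
  have h2 : SI i * SI (i+1) * SI i * (S (i+1) * S i * S (i+1)) = 1 := by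
    rw [← braid i hi]
    calc SI i * SI (i+1) * SI i * (S i * S (i+1) * S i)
        = SI i * SI (i+1) * ((SI i * S i) * S (i+1)) * S i := by simp [mul_assoc]
      _ = SI i * ((SI (i+1) * S (i+1)) * S i) := by rw [si_s i hu]; simp [mul_assoc]
      _ = SI i * S i := by rw [si_s (i+1) hv, one_mul]
      _ = 1 := si_s i hu
  have hab : S (i+1) * S i * S (i+1) * (SI (i+1) * SI i * SI (i+1)) = 1 := by
    calc S (i+1) * S i * S (i+1) * (SI (i+1) * SI i * SI (i+1))
        = S (i+1) * S i * ((S (i+1) * SI (i+1)) * SI i) * SI (i+1) := by simp [mul_assoc]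
      _ = S (i+1) * ((S i * SI i) * SI (i+1)) := by rw [s_si (i+1) hv]; simp [mul_assoc]
      _ = S (i+1) * SI (i+1) := by rw [s_si i hu, one_mul]
      _ = 1 := s_si (i+1) hv
  exact rcancel hab (h1.trans h2.symm)

theorem braid_B4 (i : ℕ) (hi : 1 ≤ i ∧ i + 1 ≤ n - 1) :
    SI (i+1) * SI i * S (i+1) = S i * SI (i+1) * SI i := by
  have hu : (1 ≤ i ∧ i ≤ n - 1) := ⟨hi.1, by omega⟩
  have hv : (1 ≤ i + 1 ∧ i + 1 ≤ n - 1) := ⟨by omega, hi.2⟩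
  apply rcancel (si_s (i+1) hv)
  calc SI (i+1) * SI i * S (i+1) * SI (i+1) = SI (i+1) * SI i * (S (i+1) * SI (i+1)) := by
        simp [mul_assoc]
    _ = SI (i+1) * SI i := by rw [s_si (i+1) hv, mul_one]
    _ = (S i * SI i) * (SI (i+1) * SI i) := by rw [s_si i hu, one_mul]
    _ = S i * (SI i * SI (i+1) * SI i) := by simp [mul_assoc]
    _ = S i * (SI (i+1) * SI i * SI (i+1)) := by rw [braid_B3 i hi]
    _ = S i * SI (i+1) * SI i * SI (i+1) := by simp [mul_assoc]

end TPMAux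

-- The generalized ties, in a recursion-friendly form.
def TT (n : ℕ) : ℕ → ℕ → TPM n
  | i, 0 => TPM.e n i
  | i, m + 1 => TPM.s n i * TT n (i+1) m * TPM.sInv n i

def Tp (n i j : ℕ) : TPM n := TT n i (j - 1 - i)

/-- The transposition (k, k+1) acting on ℕ. -/
def tauN (k x : ℕ) : ℕ := if x = k then k + 1 else if x = k + 1 then k else x

def ta (k i j : ℕ) : ℕ := min (tauN k i) (tauN k j)

def tb (k i j : ℕ) : ℕ := max (tauN k i) (tauN k j)

namespace TPMAux

variable {n : ℕ}

local notation "S" => TPM.s n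
local notation "SI" => TPM.sInv n
local notation "P" => TPM.p n
local notation "E" => TPM.e n

theorem Tp_base (i : ℕ) : Tp n i (i+1) = E i := by
  have h : i + 1 - 1 - i = 0 := by omega
  rw [Tp, h]
  rfl

theorem Tp_step {i j : ℕ} (h : i + 1 < j) : Tp n i j = S i * Tp n (i+1) j * SI i := by
  have h2 : j - 1 - i = (j - 1 - (i+1)) + 1 := by omega
  rw [Tp, h2, Tp]
  rfl

theorem TT_eq : ∀ (c i : ℕ),
    ((List.range' i c).map (TPM.s n)).prod * TPM.e n (i + c) *
      ((List.range' i c).reverse.map (TPM.sInv n)).prod = TT n i c := by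
  intro c
  induction c with
  | zero => intro i; simp [TT]
  | succ c ih =>
    intro i
    have hr : List.range' i (c+1) = i :: List.range' (i+1) c := by
      rw [List.range'_succ]
    have hidx : i + (c + 1) = (i + 1) + c := by omega
    rw [hr, hidx]
    simp only [List.map_cons, List.prod_cons, List.reverse_cons, List.map_append,
      List.prod_append, List.map_nil, List.prod_nil, mul_one]
    rw [show TT n i (c+1) = TPM.s n i * TT n (i+1) c * TPM.sInv n i from rfl, ← ih (i+1)]
    simp [mul_assoc]

theorem genTie_eq {i j : ℕ} (h : i < j) : TPM.genTie n i j = Tp n i j := by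
  unfold TPM.genTie Tp
  have h1 : i + (j - 1 - i) = j - 1 := by omega
  rw [← TT_eq (j - 1 - i) i, h1]

-- "continuation" versions of relations, for rewriting in right-associated products
theorem swx1 {a b : TPM n} (h : a * b = 1) (x : TPM n) : a * (b * x) = x := by
  rw [← mul_assoc, h, one_mul]

theorem swx2 {a b c d : TPM n} (h : a * b = c * d) (x : TPM n) :
    a * (b * x) = c * (d * x) := by
  have := congrArg (· * x) h
  simpa only [mul_assoc] using this

theorem swx3 {a b c d e f : TPM n} (h : a * b * c = d * e * f) (x : TPM n) :
    a * (b * (c * x)) = d * (e * (f * x)) := by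
  have := congrArg (· * x) h
  simpa only [mul_assoc] using this

theorem swx31 {a b c d : TPM n} (h : a * b * c = d) (x : TPM n) :
    a * (b * (c * x)) = d * x := by
  have := congrArg (· * x) h
  simpa only [mul_assoc] using this

theorem swx24 {a b c d e f g : TPM n} (h : a * b = c * d * e * f) (x : TPM n) :
    a * (b * x) = c * (d * (e * (f * x))) := by
  have := congrArg (· * x) h
  simpa only [mul_assoc] using this

theorem swt3 {a b c d e f : TPM n} (h : a * b * c = d * e * f) :
    a * (b * c) = d * (e * f) := by
  simpa only [mul_assoc] using h

theorem swt31 {a b c d : TPM n} (h : a * b * c = d) : a * (b * c) = d := by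
  simpa only [mul_assoc] using h

theorem swt24 {a b c d e f : TPM n} (h : a * b = c * d * e * f) :
    a * b = c * (d * (e * f)) := by
  simpa only [mul_assoc] using h

-- σ_k² commutes with η_{k+1} and with η_k (pure-braid commutations)
theorem E1 (k : ℕ) (h : 1 ≤ k ∧ k + 1 ≤ n - 1) :
    E (k+1) * S k * S k = S k * S k * E (k+1) := by
  have hu : (1 ≤ k ∧ k ≤ n - 1) := ⟨h.1, by omega⟩
  have hv : (1 ≤ k + 1 ∧ k + 1 ≤ n - 1) := ⟨by omega, h.2⟩
  have h1 : E (k+1) * S k * SI (k+1) = S k * SI (k+1) * E k :=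
    e_slide_neg (k+1) k hv hu (Or.inr rfl)
  have h2 : E k * S (k+1) * S k = S (k+1) * S k * E (k+1) :=
    e_slide_pos k (k+1) hu hv (Or.inl rfl)
  have hflat : E (k+1) * (S k * S k) = S k * (S k * E (k+1)) :=
    calc E (k+1) * (S k * S k)
        = E (k+1) * (S k * (SI (k+1) * (S (k+1) * S k))) := by
          rw [swx1 (si_s (k+1) hv)]
      _ = S k * (SI (k+1) * (E k * (S (k+1) * S k))) := by rw [swx3 h1]
      _ = S k * (SI (k+1) * (S (k+1) * (S k * E (k+1)))) := by rw [swt3 h2]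
      _ = S k * (S k * E (k+1)) := by rw [swx1 (si_s (k+1) hv)]
  simpa only [mul_assoc] using hflat

theorem E2 (k : ℕ) (h : 1 ≤ k ∧ k + 1 ≤ n - 1) :
    E k * S (k+1) * S (k+1) = S (k+1) * S (k+1) * E k := by
  have hu : (1 ≤ k ∧ k ≤ n - 1) := ⟨h.1, by omega⟩
  have hv : (1 ≤ k + 1 ∧ k + 1 ≤ n - 1) := ⟨by omega, h.2⟩
  have h1 : E k * S (k+1) * SI k = S (k+1) * SI k * E (k+1) :=
    e_slide_neg k (k+1) hu hv (Or.inl rfl)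
  have h2 : E (k+1) * S k * S (k+1) = S k * S (k+1) * E k :=
    e_slide_pos (k+1) k hv hu (Or.inr rfl)
  have hflat : E k * (S (k+1) * S (k+1)) = S (k+1) * (S (k+1) * E k) :=
    calc E k * (S (k+1) * S (k+1))
        = E k * (S (k+1) * (SI k * (S k * S (k+1)))) := by rw [swx1 (si_s k hu)]
      _ = S (k+1) * (SI k * (E (k+1) * (S k * S (k+1)))) := by rw [swx3 h1]
      _ = S (k+1) * (SI k * (S k * (S (k+1) * E k))) := by rw [swt3 h2]
      _ = S (k+1) * (S (k+1) * E k) := by rw [swx1 (si_s k hu)]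
  simpa only [mul_assoc] using hflat

theorem Tp_base' {i j : ℕ} (h : j = i + 1) : Tp n i j = E i := by
  subst h; exact Tp_base i

theorem Tp_step' {i i' j : ℕ} (h : i + 1 < j) (h2 : i' = i + 1) :
    Tp n i j = S i * Tp n i' j * SI i := by
  subst h2; exact Tp_step h

/-- `σ_k^{±1}` and `p_k` commute with `Tp i j` when `k ≤ i-2` or `k ≥ j+1`. -/
theorem far_comm : ∀ d i j k : ℕ, j = i + d + 1 → 1 ≤ i → j ≤ n → 1 ≤ k → k ≤ n - 1 →
    (k + 2 ≤ i ∨ j + 1 ≤ k) →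
    (S k * Tp n i j = Tp n i j * S k) ∧ (SI k * Tp n i j = Tp n i j * SI k) ∧
      (P k * Tp n i j = Tp n i j * P k) := by
  intro d
  induction d with
  | zero =>
    intro i j k hj hi hjn hk1 hkn hfar
    have hi' : 1 ≤ i ∧ i ≤ n - 1 := ⟨hi, by omega⟩
    have hk' : 1 ≤ k ∧ k ≤ n - 1 := ⟨hk1, hkn⟩
    rw [Tp_base' (show j = i + 1 by omega)]
    exact ⟨(e_s_far i k hi' hk' (by omega)).symm, (si_e_far i k hi' hk' (by omega)).symm,
      p_e_far k i hk' hi' (by omega)⟩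
  | succ d ih =>
    intro i j k hj hi hjn hk1 hkn hfar
    have hlt : i + 1 < j := by omega
    have hi' : 1 ≤ i ∧ i ≤ n - 1 := ⟨hi, by omega⟩
    have hk' : 1 ≤ k ∧ k ≤ n - 1 := ⟨hk1, hkn⟩
    obtain ⟨ih1, ih2, ih3⟩ := ih (i+1) j k (by omega) (by omega) hjn hk1 hkn (by omega)
    rw [Tp_step hlt]
    refine ⟨?_, ?_, ?_⟩
    · simp only [mul_assoc]
      rw [swx2 (s_comm k i hk' hi' (by omega)), swx2 ih1,
        si_s_comm k i hk' hi' (by omega)]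
    · simp only [mul_assoc]
      rw [swx2 (si_s_comm i k hi' hk' (by omega)).symm, swx2 ih2,
        si_si_comm k i hk' hi' (by omega)]
    · simp only [mul_assoc]
      rw [swx2 (p_s_far k i hk' hi' (by omega)), swx2 ih3,
        p_si_far k i hk' hi' (by omega)]

/-- Conjugation of generalized ties by the braid generators realizes the
transposition action on pairs. -/
theorem conj : ∀ d i j k : ℕ, j = i + d + 1 → 1 ≤ i → j ≤ n → 1 ≤ k → k ≤ n - 1 →
    (S k * Tp n i j = Tp n (ta k i j) (tb k i j) * S k) ∧
    (SI k * Tp n i j = Tp n (ta k i j) (tb k i j) * SI k) := by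
  intro d
  induction d using Nat.strong_induction_on with
  | _ d IH =>
  intro i j k hj hi hjn hk1 hkn
  have hi' : 1 ≤ i ∧ i ≤ n - 1 := ⟨hi, by omega⟩
  have hk' : 1 ≤ k ∧ k ≤ n - 1 := ⟨hk1, hkn⟩
  by_cases hd0 : d = 0
  · -- base case : j = i + 1
    have hj1 : j = i + 1 := by omega
    by_cases hki : k = i
    · subst hki
      have hta : ta k k j = k := by simp only [ta, tauN]; split_ifs <;> omega
      have htb : tb k k j = k + 1 := by simp only [tb, tauN]; split_ifs <;> omega
      rw [hta, htb, Tp_base' hj1, Tp_base]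
      exact ⟨(e_s k hk').symm, (si_e k hk').symm⟩
    by_cases hfar : i + 2 ≤ k ∨ k + 2 ≤ i
    · have hta : ta k i j = i := by simp only [ta, tauN]; split_ifs <;> omega
      have htb : tb k i j = i + 1 := by simp only [tb, tauN]; split_ifs <;> omega
      rw [hta, htb, Tp_base' hj1, Tp_base]
      exact ⟨(e_s_far i k hi' hk' hfar).symm, (si_e_far i k hi' hk' hfar).symm⟩
    by_cases hkim : i = k + 1
    · -- k = i - 1 ; pair (k+1, k+2) ↦ (k, k+2)
      have hkv : 1 ≤ k ∧ k + 1 ≤ n - 1 := ⟨hk1, by omega⟩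
      have hta : ta k i j = k := by simp only [ta, tauN]; split_ifs <;> omega
      have htb : tb k i j = j := by simp only [tb, tauN]; split_ifs <;> omega
      have hi1 : E i = E (k+1) := by rw [hkim]
      have hTkj : Tp n k j = S k * (E (k+1) * SI k) := by
        rw [Tp_step' (show k + 1 < j by omega) hkim, Tp_base' (show j = i + 1 by omega), hi1]
        simp only [mul_assoc]
      rw [hta, htb, Tp_base' hj1, hi1]
      constructor
      · rw [hTkj]
        simp only [mul_assoc]
        rw [si_s k hk', mul_one]
      · refine lcancel (si_s k hk') ?_
        rw [swx1 (s_si k hk'), hTkj]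
        simp only [mul_assoc]
        rw [← swx3 (E1 k hkv), swx1 (s_si k hk'), s_si k hk', mul_one]
    · -- k = i + 1 ; pair (i, i+1) ↦ (i, i+2)
      have hkip : k = i + 1 := by omega
      subst hkip
      have hv : 1 ≤ i + 1 ∧ i + 1 ≤ n - 1 := ⟨by omega, hkn⟩
      have hE : 1 ≤ i ∧ i + 1 ≤ n - 1 := ⟨hi, hkn⟩
      have hta : ta (i+1) i j = i := by simp only [ta, tauN]; split_ifs <;> omega
      have htb : tb (i+1) i j = i + 2 := by simp only [tb, tauN]; split_ifs <;> omega
      have hT : Tp n i (i+2) = S i * (E (i+1) * SI i) := by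
        rw [Tp_step' (show i + 1 < i + 2 by omega) rfl, Tp_base' (by omega)]
        simp only [mul_assoc]
      rw [hta, htb, Tp_base' hj1]
      have h2 : E (i+1) * S i * S (i+1) = S i * S (i+1) * E i :=
        e_slide_pos (i+1) i hv hi' (Or.inr rfl)
      have h3 : E i * S (i+1) * S i = S (i+1) * S i * E (i+1) :=
        e_slide_pos i (i+1) hi' hv (Or.inl rfl)
      constructor
      · have key1 : S (i+1) * E i = SI i * (E (i+1) * (S i * S (i+1))) := by
          refine lcancel (si_s i hi') ?_
          rw [swx1 (s_si i hi'), swt3 h2]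
        have key2 : SI i * (E (i+1) * S i) = S i * (E (i+1) * SI i) := by
          refine lcancel (si_s i hi') ?_
          rw [swx1 (s_si i hi'), ← swx3 (E1 i hE), s_si i hi', mul_one]
        calc S (i+1) * E i = SI i * (E (i+1) * (S i * S (i+1))) := key1
          _ = S i * (E (i+1) * (SI i * S (i+1))) := by
              have := congrArg (· * S (i+1)) key2
              simpa only [mul_assoc] using this
          _ = Tp n i (i+2) * S (i+1) := by rw [hT]; simp only [mul_assoc]
      · refine lcancel (si_s (i+1) hv) ?_
        rw [swx1 (s_si (i+1) hv), hT]
        simp only [mul_assoc]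
        rw [← swx3 h3, swx1 (s_si i hi'), s_si (i+1) hv, mul_one]
  · -- inductive step : j ≥ i + 2
    have hlt : i + 1 < j := by omega
    by_cases hA : i + 2 ≤ k ∨ k + 2 ≤ i
    · obtain ⟨ih1, ih2⟩ := IH (d-1) (by omega) (i+1) j k (by omega) (by omega) hjn hk1 hkn
      have h1 : ta k (i+1) j = i + 1 := by simp only [ta, tauN]; split_ifs <;> omega
      rw [h1] at ih1 ih2
      have hJ2 : i + 1 < tb k (i+1) j := by simp only [tb, tauN]; split_ifs <;> omega
      have hta : ta k i j = i := by simp only [ta, tauN]; split_ifs <;> omega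
      have htb : tb k i j = tb k (i+1) j := by
        simp only [ta, tb, tauN]; split_ifs <;> omega
      rw [hta, htb, Tp_step hlt, Tp_step hJ2]
      constructor
      · simp only [mul_assoc]
        rw [swx2 (s_comm k i hk' hi' (by omega)), swx2 ih1,
          si_s_comm k i hk' hi' (by omega)]
      · simp only [mul_assoc]
        rw [swx2 (si_s_comm i k hi' hk' (by omega)).symm, swx2 ih2,
          si_si_comm k i hk' hi' (by omega)]
    by_cases hB : i = k + 1
    · -- k = i - 1
      have hkv : 1 ≤ k ∧ k + 1 ≤ n - 1 := ⟨hk1, by omega⟩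
      have hta : ta k i j = k := by simp only [ta, tauN]; split_ifs <;> omega
      have htb : tb k i j = j := by simp only [tb, tauN]; split_ifs <;> omega
      have hstep2 : Tp n k j = S k * (Tp n i j * SI k) := by
        rw [Tp_step' (show k + 1 < j by omega) hB]
        simp only [mul_assoc]
      obtain ⟨ihb1, ihb2⟩ := IH (d-1) (by omega) (i+1) j i (by omega) (by omega) hjn hi hi'.2
      have h1 : ta i (i+1) j = i := by simp only [ta, tauN]; split_ifs <;> omega
      have h2 : tb i (i+1) j = j := by simp only [tb, tauN]; split_ifs <;> omega
      rw [h1, h2] at ihb1 ihb2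
      rw [hta, htb]
      constructor
      · rw [hstep2]
        simp only [mul_assoc]
        rw [si_s k hk', mul_one]
      · -- need σ_{k}² commutes with Tp i j
        obtain ⟨fS, fSI, -⟩ := far_comm (d-1) (i+1) j k (by omega) (by omega) hjn hk1 hkn
          (by omega)
        have B5' : S i * S k * SI i = SI k * S i * S k := by
          have := braid_B5 k hkv; rw [← hB] at this; exact this
        have hflip : Tp n (i+1) j * S i = S i * Tp n i j := by
          have h0 := congrArg (fun z => S i * z * S i) ihb2
          simp only [mul_assoc] at h0
          rw [swx1 (s_si i hi'), si_s i hi', mul_one] at h0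
          exact h0
        have hsq : S i * (S i * Tp n (i+1) j) = Tp n (i+1) j * (S i * S i) := by
          calc S i * (S i * Tp n (i+1) j) = S i * (Tp n i j * S i) := by rw [ihb1]
            _ = (S i * Tp n i j) * S i := by simp only [mul_assoc]
            _ = (Tp n (i+1) j * S i) * S i := by rw [← hflip]
            _ = Tp n (i+1) j * (S i * S i) := by simp only [mul_assoc]
        have hsqx : ∀ x : TPM n, S i * (S i * (Tp n (i+1) j * x)) =
            Tp n (i+1) j * (S i * (S i * x)) := fun x => by
          have := congrArg (· * x) hsq; simpa only [mul_assoc] using this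
        have haab : S i * (S k * (S k * SI i)) = SI k * (S i * (S i * S k)) := by
          calc S i * (S k * (S k * SI i))
              = S i * (S k * (SI i * (S i * (S k * SI i)))) := by rw [swx1 (si_s i hi')]
            _ = SI k * (S i * (S k * (S i * (S k * SI i)))) := by rw [swx3 B5']
            _ = SI k * (S i * (S k * (SI k * (S i * S k)))) := by rw [swt3 B5']
            _ = SI k * (S i * (S i * S k)) := by rw [swx1 (s_si k hk')]
        have haabx : ∀ x : TPM n, S i * (S k * (S k * (SI i * x))) =
            SI k * (S i * (S i * (S k * x))) := fun x => by
          have := congrArg (· * x) haab; simpa only [mul_assoc] using this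
        have hs1 : S i * (S k * (S k * Tp n i j)) * SI i =
            Tp n (i+1) j * (SI k * (S i * (S i * S k))) := by
          simp only [mul_assoc]
          rw [← ihb2, haabx, fS, hsqx, swx2 fSI]
        have hs2 : S i * (Tp n i j * (S k * S k)) * SI i =
            Tp n (i+1) j * (SI k * (S i * (S i * S k))) := by
          rw [Tp_step hlt]
          simp only [mul_assoc]
          rw [hsqx, swx1 (s_si i hi'), haab]
        have hC : S k * (S k * Tp n i j) = Tp n i j * (S k * S k) :=
          lcancel (si_s i hi') (rcancel (si_s i hi') (hs1.trans hs2.symm))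
        have hCx : ∀ x : TPM n, S k * (S k * (Tp n i j * x)) =
            Tp n i j * (S k * (S k * x)) := fun x => by
          have := congrArg (· * x) hC; simpa only [mul_assoc] using this
        refine lcancel (si_s k hk') ?_
        rw [swx1 (s_si k hk'), hstep2]
        simp only [mul_assoc]
        rw [hCx, swx1 (s_si k hk'), s_si k hk', mul_one]
    by_cases hCk : k = i
    · -- pair (i,j) ↦ (i+1, j)
      obtain ⟨ihb1, ihb2⟩ := IH (d-1) (by omega) (i+1) j i (by omega) (by omega) hjn hi hi'.2
      have h1 : ta i (i+1) j = i := by simp only [ta, tauN]; split_ifs <;> omega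
      have h2 : tb i (i+1) j = j := by simp only [tb, tauN]; split_ifs <;> omega
      rw [h1, h2] at ihb1 ihb2
      have hta : ta k i j = i + 1 := by simp only [ta, tauN]; split_ifs <;> omega
      have htb : tb k i j = j := by simp only [tb, tauN]; split_ifs <;> omega
      rw [hta, htb, hCk]
      constructor
      · have h0 := congrArg (fun z => S i * z * S i) ihb2
        simp only [mul_assoc] at h0
        rw [swx1 (s_si i hi'), si_s i hi', mul_one] at h0
        exact h0.symm
      · rw [Tp_step hlt]
        simp only [mul_assoc]
        rw [swx1 (si_s i hi')]
    -- remaining case : k = i + 1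
    have he : k = i + 1 := by omega
    by_cases hD : j = i + 2
    · -- flip via the already-known case of the pair (i, i+1)
      obtain ⟨ihg1, ihg2⟩ := IH 0 (by omega) i (i+1) k (by omega) hi (by omega) hk1 hkn
      have h1 : ta k i (i+1) = i := by simp only [ta, tauN]; split_ifs <;> omega
      have h2 : tb k i (i+1) = j := by simp only [tb, tauN]; split_ifs <;> omega
      rw [h1, h2] at ihg1 ihg2
      have hta : ta k i j = i := by simp only [ta, tauN]; split_ifs <;> omega
      have htb : tb k i j = i + 1 := by simp only [tb, tauN]; split_ifs <;> omega
      rw [hta, htb]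
      constructor
      · have h0 := congrArg (fun z => S k * z * S k) ihg2
        simp only [mul_assoc] at h0
        rw [swx1 (s_si k hk'), si_s k hk', mul_one] at h0
        exact h0.symm
      · have h0 := congrArg (fun z => SI k * z * SI k) ihg1
        simp only [mul_assoc] at h0
        rw [swx1 (si_s k hk'), s_si k hk', mul_one] at h0
        exact h0.symm
    · -- k = i+1, j ≥ i+3 : commutation
      have hkv : 1 ≤ i ∧ i + 1 ≤ n - 1 := ⟨hi, by omega⟩
      have hta : ta k i j = i := by simp only [ta, tauN]; split_ifs <;> omega
      have htb : tb k i j = j := by simp only [tb, tauN]; split_ifs <;> omega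
      obtain ⟨fS, fSI, -⟩ := far_comm (j-i-3) (i+1+1) j i (by omega) (by omega) hjn hi
        hi'.2 (by omega)
      have B1 := braid i hkv
      have B2' := braid_B2 i hkv
      have B3' := braid_B3 i hkv
      have B4' := braid_B4 i hkv
      rw [hta, htb, he, Tp_step hlt, Tp_step' (show (i+1) + 1 < j by omega) rfl]
      constructor
      · simp only [mul_assoc]
        rw [← swx3 B1, swx2 fS, swt3 B4']
      · simp only [mul_assoc]
        rw [swx3 B2', swx2 fSI, swt3 B3']

theorem conj' {i j k : ℕ} (hi : 1 ≤ i) (hij : i < j) (hjn : j ≤ n) (hk1 : 1 ≤ k)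
    (hkn : k ≤ n - 1) :
    (S k * Tp n i j = Tp n (ta k i j) (tb k i j) * S k) ∧
    (SI k * Tp n i j = Tp n (ta k i j) (tb k i j) * SI k) :=
  conj (j - i - 1) i j k (by omega) hi hjn hk1 hkn

/-- Sliding `p_k` through a generalized tie. -/
theorem pslide : ∀ μ i j k : ℕ, (j - i) + (j - k) < μ → 1 ≤ i → i < j → j ≤ n →
    1 ≤ k → k ≤ n - 1 → P k * Tp n i j = Tp n (ta k i j) (tb k i j) * P k := by
  intro μ
  induction μ with
  | zero => intro i j k hm; omega
  | succ μ ih =>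
    intro i j k hm hi hij hjn hk1 hkn
    have hi' : 1 ≤ i ∧ i ≤ n - 1 := ⟨hi, by omega⟩
    have hk' : 1 ≤ k ∧ k ≤ n - 1 := ⟨hk1, hkn⟩
    by_cases hq1 : k = i ∧ j = i + 1
    · have hta : ta k i j = i := by simp only [ta, tauN]; split_ifs <;> omega
      have htb : tb k i j = j := by simp only [tb, tauN]; split_ifs <;> omega
      rw [hta, htb, Tp_base' (by omega), hq1.1]
      exact p_e i hi'
    by_cases hq2 : k + 2 ≤ i ∨ j + 1 ≤ k
    · have hta : ta k i j = i := by simp only [ta, tauN]; split_ifs <;> omega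
      have htb : tb k i j = j := by simp only [tb, tauN]; split_ifs <;> omega
      rw [hta, htb]
      exact (far_comm (j-i-1) i j k (by omega) hi hjn hk1 hkn hq2).2.2
    by_cases hq3 : i = k + 1
    · -- pair (k+1, j) ↦ (k, j)
      have hta : ta k i j = k := by simp only [ta, tauN]; split_ifs <;> omega
      have htb : tb k i j = j := by simp only [tb, tauN]; split_ifs <;> omega
      rw [hta, htb, hq3]
      by_cases hq3b : j = k + 2
      · rw [Tp_base' (show j = (k+1) + 1 by omega),
          Tp_step' (show k + 1 < j by omega) rfl, Tp_base' (show j = (k+1) + 1 by omega)]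
        exact p_e_conj k (k+1) hk' ⟨by omega, by omega⟩ (Or.inl rfl)
      · have hj3 : k + 3 ≤ j := by omega
        have hj1' : 1 ≤ j - 1 ∧ j - 1 ≤ n - 1 := ⟨by omega, by omega⟩
        obtain ⟨c1, -⟩ := conj' (show 1 ≤ k+1 by omega) (show k+1 < j-1 by omega)
          (show j-1 ≤ n by omega) hj1'.1 hj1'.2
        have hca : ta (j-1) (k+1) (j-1) = k+1 := by
          simp only [ta, tauN]; split_ifs <;> omega
        have hcb : tb (j-1) (k+1) (j-1) = j := by
          simp only [tb, tauN]; split_ifs <;> omega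
        rw [hca, hcb] at c1
        obtain ⟨d1, -⟩ := conj' (n := n) hk1 (show k < j-1 by omega)
          (show j-1 ≤ n by omega) hj1'.1 hj1'.2
        have hda : ta (j-1) k (j-1) = k := by simp only [ta, tauN]; split_ifs <;> omega
        have hdb : tb (j-1) k (j-1) = j := by simp only [tb, tauN]; split_ifs <;> omega
        rw [hda, hdb] at d1
        have hpre : Tp n (k+1) j = S (j-1) * Tp n (k+1) (j-1) * SI (j-1) :=
          (fold c1 (s_si (j-1) hj1')).symm
        have hpost : S (j-1) * Tp n k (j-1) * SI (j-1) = Tp n k j :=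
          fold d1 (s_si (j-1) hj1')
        have ihr := ih (k+1) (j-1) k (by omega) (by omega) (by omega) (by omega) hk1 hkn
        have hia : ta k (k+1) (j-1) = k := by simp only [ta, tauN]; split_ifs <;> omega
        have hib : tb k (k+1) (j-1) = j - 1 := by
          simp only [tb, tauN]; split_ifs <;> omega
        rw [hia, hib] at ihr
        calc P k * Tp n (k+1) j
            = P k * (S (j-1) * Tp n (k+1) (j-1) * SI (j-1)) := by rw [hpre]
          _ = S (j-1) * (Tp n k (j-1) * (P k * SI (j-1))) := by
              simp only [mul_assoc]
              rw [swx2 (p_s_far k (j-1) hk' hj1' (Or.inl (by omega))), swx2 ihr]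
          _ = S (j-1) * (Tp n k (j-1) * (SI (j-1) * P k)) := by
              rw [p_si_far k (j-1) hk' hj1' (Or.inl (by omega))]
          _ = Tp n k j * P k := by rw [← hpost]; simp only [mul_assoc]
    by_cases hq4 : k = j
    · -- pair (i, j) ↦ (i, j+1)
      have hta : ta k i j = i := by simp only [ta, tauN]; split_ifs <;> omega
      have htb : tb k i j = j + 1 := by simp only [tb, tauN]; split_ifs <;> omega
      rw [hta, htb]
      by_cases hq4b : i + 1 = j
      · obtain ⟨c1, -⟩ := conj' (n := n) hi hij hjn hk1 hkn
        have hca : ta k i j = i := by simp only [ta, tauN]; split_ifs <;> omega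
        have hcb : tb k i j = j + 1 := by simp only [tb, tauN]; split_ifs <;> omega
        rw [hca, hcb] at c1
        calc P k * Tp n i j = P k * E i := by rw [Tp_base' (by omega)]
          _ = S k * E i * SI k * P k := p_e_conj k i hk' hi' (Or.inr (by omega))
          _ = S k * Tp n i j * SI k * P k := by rw [Tp_base' (show j = i + 1 by omega)]
          _ = Tp n i (j+1) * S k * SI k * P k := by rw [c1]
          _ = Tp n i (j+1) * P k := by
              rw [mul_assoc (Tp n i (j+1)) (S k) (SI k), s_si k hk', mul_one]
      · have hlt : i + 1 < j := by omega
        have ihr := ih (i+1) j k (by omega) (by omega) (by omega) hjn hk1 hkn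
        have hia : ta k (i+1) j = i + 1 := by simp only [ta, tauN]; split_ifs <;> omega
        have hib : tb k (i+1) j = j + 1 := by simp only [tb, tauN]; split_ifs <;> omega
        rw [hia, hib] at ihr
        rw [Tp_step hlt, Tp_step (show i + 1 < j + 1 by omega)]
        simp only [mul_assoc]
        rw [swx2 (p_s_far k i hk' hi' (by omega)), swx2 ihr,
          p_si_far k i hk' hi' (by omega)]
    by_cases hq5 : k = i
    · -- pair (i, j) ↦ (i+1, j), j ≥ i + 2
      have hta : ta k i j = i + 1 := by simp only [ta, tauN]; split_ifs <;> omega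
      have htb : tb k i j = j := by simp only [tb, tauN]; split_ifs <;> omega
      have hlt : i + 1 < j := by omega
      rw [hta, htb, hq5]
      have ihr := ih (i+1) j k (by omega) (by omega) (by omega) hjn hk1 hkn
      have hia : ta k (i+1) j = i := by simp only [ta, tauN]; split_ifs <;> omega
      have hib : tb k (i+1) j = j := by simp only [tb, tauN]; split_ifs <;> omega
      rw [hia, hib, hq5] at ihr
      obtain ⟨c1, -⟩ := conj' (n := n) hi hij hjn hi hi'.2
      have hca : ta i i j = i + 1 := by simp only [ta, tauN]; split_ifs <;> omega
      have hcb : tb i i j = j := by simp only [tb, tauN]; split_ifs <;> omega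
      rw [hca, hcb] at c1
      calc P i * Tp n i j = P i * (S i * Tp n (i+1) j * SI i) := by rw [Tp_step hlt]
        _ = S i * (Tp n i j * (P i * SI i)) := by
            simp only [mul_assoc]
            rw [swx2 (p_s i hi'), swx2 ihr]
        _ = S i * (Tp n i j * (SI i * P i)) := by rw [p_si i hi']
        _ = Tp n (i+1) j * P i := by rw [← fold c1 (s_si i hi')]; simp only [mul_assoc]
    by_cases hq6 : k = j - 1
    · -- pair (i, j) ↦ (i, j-1), i ≤ j-2
      have hta : ta k i j = i := by simp only [ta, tauN]; split_ifs <;> omega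
      have htb : tb k i j = j - 1 := by simp only [tb, tauN]; split_ifs <;> omega
      rw [hta, htb]
      obtain ⟨c1, -⟩ := conj' (n := n) hi (show i < j - 1 by omega) (by omega) hk1 hkn
      have hca : ta k i (j-1) = i := by simp only [ta, tauN]; split_ifs <;> omega
      have hcb : tb k i (j-1) = j := by simp only [tb, tauN]; split_ifs <;> omega
      rw [hca, hcb] at c1
      have hrep : Tp n i j = S k * Tp n i (j-1) * SI k := (fold c1 (s_si k hk')).symm
      obtain ⟨c2, -⟩ := conj' (n := n) hi hij hjn hk1 hkn
      have hc2a : ta k i j = i := by simp only [ta, tauN]; split_ifs <;> omega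
      have hc2b : tb k i j = j - 1 := by simp only [tb, tauN]; split_ifs <;> omega
      rw [hc2a, hc2b] at c2
      have ihr := ih i (j-1) k (by omega) hi (by omega) (by omega) hk1 hkn
      have hia : ta k i (j-1) = i := by simp only [ta, tauN]; split_ifs <;> omega
      have hib : tb k i (j-1) = j := by simp only [tb, tauN]; split_ifs <;> omega
      rw [hia, hib] at ihr
      calc P k * Tp n i j = P k * (S k * Tp n i (j-1) * SI k) := by rw [hrep]
        _ = S k * (Tp n i j * (P k * SI k)) := by
            simp only [mul_assoc]
            rw [swx2 (p_s k hk'), swx2 ihr]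
        _ = S k * (Tp n i j * (SI k * P k)) := by rw [p_si k hk']
        _ = Tp n i (j-1) * P k := by rw [← fold c2 (s_si k hk')]; simp only [mul_assoc]
    · -- straddle : i + 1 ≤ k ≤ j - 2, the tie is fixed
      have hst1 : i + 1 ≤ k := by omega
      have hst2 : k + 2 ≤ j := by omega
      have hk1v : 1 ≤ k + 1 ∧ k + 1 ≤ n - 1 := ⟨by omega, by omega⟩
      have hssp := ssp (n := n) k ⟨hk1, by omega⟩
      have hta : ta k i j = i := by simp only [ta, tauN]; split_ifs <;> omega
      have htb : tb k i j = j := by simp only [tb, tauN]; split_ifs <;> omega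
      rw [hta, htb]
      by_cases hq7 : j = k + 2
      · obtain ⟨cA, -⟩ := conj' (n := n) hi hij hjn hk1v.1 hk1v.2
        have hcAa : ta (k+1) i j = i := by simp only [ta, tauN]; split_ifs <;> omega
        have hcAb : tb (k+1) i j = k + 1 := by simp only [tb, tauN]; split_ifs <;> omega
        rw [hcAa, hcAb] at cA
        obtain ⟨cB, -⟩ := conj' (n := n) hi (show i < k + 1 by omega) (by omega) hk1 hkn
        have hcBa : ta k i (k+1) = i := by simp only [ta, tauN]; split_ifs <;> omega
        have hcBb : tb k i (k+1) = k := by simp only [tb, tauN]; split_ifs <;> omega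
        rw [hcBa, hcBb] at cB
        obtain ⟨-, -, fp⟩ := far_comm (k-i-1) i k (k+1) (by omega) hi (by omega)
          hk1v.1 hk1v.2 (by omega)
        have EL : S k * (S (k+1) * (P k * Tp n i j)) =
            Tp n i k * (S k * (S (k+1) * P k)) := by
          rw [swx3 hssp, cA, swx2 cB, swx2 fp, ← swt3 hssp]
        have ER : S k * (S (k+1) * (Tp n i j * P k)) =
            Tp n i k * (S k * (S (k+1) * P k)) := by
          rw [swx2 cA, swx2 cB]
        exact lcancel (si_s (k+1) hk1v) (lcancel (si_s k hk') (EL.trans ER.symm))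
      · have hj3 : k + 3 ≤ j := by omega
        obtain ⟨cA, -⟩ := conj' (n := n) hi hij hjn hk1v.1 hk1v.2
        have hcAa : ta (k+1) i j = i := by simp only [ta, tauN]; split_ifs <;> omega
        have hcAb : tb (k+1) i j = j := by simp only [tb, tauN]; split_ifs <;> omega
        rw [hcAa, hcAb] at cA
        obtain ⟨cB, -⟩ := conj' (n := n) hi hij hjn hk1 hkn
        have hcBa : ta k i j = i := by simp only [ta, tauN]; split_ifs <;> omega
        have hcBb : tb k i j = j := by simp only [tb, tauN]; split_ifs <;> omega
        rw [hcBa, hcBb] at cB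
        have ihp := ih i j (k+1) (by omega) hi hij hjn hk1v.1 hk1v.2
        have hia : ta (k+1) i j = i := by simp only [ta, tauN]; split_ifs <;> omega
        have hib : tb (k+1) i j = j := by simp only [tb, tauN]; split_ifs <;> omega
        rw [hia, hib] at ihp
        have EL : S k * (S (k+1) * (P k * Tp n i j)) =
            Tp n i j * (S k * (S (k+1) * P k)) := by
          rw [swx3 hssp, cA, swx2 cB, swx2 ihp, ← swt3 hssp]
        have ER : S k * (S (k+1) * (Tp n i j * P k)) =
            Tp n i j * (S k * (S (k+1) * P k)) := by
          rw [swx2 cA, swx2 cB]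
        exact lcancel (si_s (k+1) hk1v) (lcancel (si_s k hk') (EL.trans ER.symm))

theorem tp_bounds {i j k : ℕ} (hi : 1 ≤ i) (hij : i < j) (hjn : j ≤ n) (hk1 : 1 ≤ k)
    (hkn : k ≤ n - 1) : 1 ≤ ta k i j ∧ ta k i j < tb k i j ∧ tb k i j ≤ n := by
  simp only [ta, tb, tauN]; split_ifs <;> omega

theorem tp_invol {i j k : ℕ} (hij : i < j) :
    ta k (ta k i j) (tb k i j) = i ∧ tb k (ta k i j) (tb k i j) = j := by
  simp only [ta, tb, tauN]; split_ifs <;> omega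

/-- A generalized tie slides (from the left) past each monoid generator. -/
theorem tie_slide {i j k : ℕ} (hi : 1 ≤ i) (hij : i < j) (hjn : j ≤ n) (hk1 : 1 ≤ k)
    (hkn : k ≤ n - 1) :
    (Tp n i j * S k = S k * Tp n (ta k i j) (tb k i j)) ∧
    (Tp n i j * SI k = SI k * Tp n (ta k i j) (tb k i j)) ∧
    (Tp n i j * P k = P k * Tp n (ta k i j) (tb k i j)) := by
  obtain ⟨hb1, hb2, hb3⟩ := tp_bounds (n := n) hi hij hjn hk1 hkn
  obtain ⟨hv1, hv2⟩ := tp_invol (k := k) hij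
  obtain ⟨c1, c2⟩ := conj' (n := n) hb1 hb2 hb3 hk1 hkn
  rw [hv1, hv2] at c1 c2
  have p1 := pslide (n := n) ((tb k i j - ta k i j) + (tb k i j - k) + 1)
    (ta k i j) (tb k i j) k (by omega) hb1 hb2 hb3 hk1 hkn
  rw [hv1, hv2] at p1
  exact ⟨c1.symm, c2.symm, p1.symm⟩

/-- Any element of the tie submonoid slides past any element of the
σ/σ⁻¹/p submonoid. -/
theorem slide_full (hn : 2 ≤ n) :
    ∀ γ ∈ Submonoid.closure
      {x : TPM n | ∃ i : ℕ, 1 ≤ i ∧ i ≤ n - 1 ∧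
        (x = TPM.s n i ∨ x = TPM.sInv n i ∨ x = TPM.p n i)},
    ∀ b ∈ Submonoid.closure
      {x : TPM n | ∃ i j : ℕ, 1 ≤ i ∧ i < j ∧ j ≤ n ∧ x = TPM.genTie n i j},
    ∃ b' ∈ Submonoid.closure
      {x : TPM n | ∃ i j : ℕ, 1 ≤ i ∧ i < j ∧ j ≤ n ∧ x = TPM.genTie n i j},
    b * γ = γ * b' := by
  have single : ∀ x ∈ {x : TPM n | ∃ i : ℕ, 1 ≤ i ∧ i ≤ n - 1 ∧
        (x = TPM.s n i ∨ x = TPM.sInv n i ∨ x = TPM.p n i)},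
      ∀ b ∈ Submonoid.closure
        {x : TPM n | ∃ i j : ℕ, 1 ≤ i ∧ i < j ∧ j ≤ n ∧ x = TPM.genTie n i j},
      ∃ b' ∈ Submonoid.closure
        {x : TPM n | ∃ i j : ℕ, 1 ≤ i ∧ i < j ∧ j ≤ n ∧ x = TPM.genTie n i j},
      b * x = x * b' := by
    intro x hx b hb
    induction hb using Submonoid.closure_induction with
    | mem y hy =>
      obtain ⟨i, j, hi, hij, hjn, rfl⟩ := hy
      obtain ⟨k, hk1, hkn, hcase⟩ := hx
      obtain ⟨hb1, hb2, hb3⟩ := tp_bounds (n := n) hi hij hjn hk1 hkn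
      obtain ⟨t1, t2, t3⟩ := tie_slide (n := n) hi hij hjn hk1 hkn
      have hmem : TPM.genTie n (ta k i j) (tb k i j) ∈ Submonoid.closure
          {x : TPM n | ∃ i j : ℕ, 1 ≤ i ∧ i < j ∧ j ≤ n ∧ x = TPM.genTie n i j} :=
        Submonoid.subset_closure ⟨ta k i j, tb k i j, hb1, hb2, hb3, rfl⟩
      refine ⟨TPM.genTie n (ta k i j) (tb k i j), hmem, ?_⟩
      rw [genTie_eq hij, genTie_eq hb2]
      rcases hcase with h | h | h <;> rw [h]
      · exact t1
      · exact t2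
      · exact t3
    | one => exact ⟨1, one_mem _, by rw [one_mul, mul_one]⟩
    | mul y z hy hz ihy ihz =>
      obtain ⟨by', hby, ey⟩ := ihy
      obtain ⟨bz', hbz, ez⟩ := ihz
      refine ⟨by' * bz', mul_mem hby hbz, ?_⟩
      calc y * z * x = y * (z * x) := by rw [mul_assoc]
        _ = y * (x * bz') := by rw [ez]
        _ = (y * x) * bz' := by rw [mul_assoc]
        _ = (x * by') * bz' := by rw [ey]
        _ = x * (by' * bz') := by rw [mul_assoc]
  intro γ hγ
  induction hγ using Submonoid.closure_induction with
  | mem x hx => exact fun b hb => single x hx b hb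
  | one => exact fun b hb => ⟨b, hb, by rw [one_mul, mul_one]⟩
  | mul y z hy hz ihy ihz =>
    intro b hb
    obtain ⟨b1, hb1, e1⟩ := ihy b hb
    obtain ⟨b2, hb2, e2⟩ := ihz b1 hb1
    refine ⟨b2, hb2, ?_⟩
    calc b * (y * z) = (b * y) * z := by rw [mul_assoc]
      _ = y * (b1 * z) := by rw [e1, mul_assoc]
      _ = y * (z * b2) := by rw [e2]
      _ = y * z * b2 := by rw [mul_assoc]

end TPMAux

/-- **Mobility property for tied pseudo braids**: for every n ≥ 2, every element α of the
tied pseudo braid monoid `TPM n` can be written as α = γ β with γ in the submonoid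
generated by the σ_i, σ_i⁻¹, p_i (1 ≤ i ≤ n−1) and β in the submonoid generated by the
generalized ties η_{i,j} (1 ≤ i < j ≤ n). -/
theorem tpm_mobility (n : ℕ) (hn : 2 ≤ n) (α : TPM n) :
    ∃ γ β : TPM n,
      γ ∈ Submonoid.closure
          {x : TPM n | ∃ i : ℕ, 1 ≤ i ∧ i ≤ n - 1 ∧
            (x = TPM.s n i ∨ x = TPM.sInv n i ∨ x = TPM.p n i)} ∧
      β ∈ Submonoid.closure
          {x : TPM n | ∃ i j : ℕ, 1 ≤ i ∧ i < j ∧ j ≤ n ∧ x = TPM.genTie n i j} ∧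
      α = γ * β := by
  obtain ⟨w, rfl⟩ := Con.mk'_surjective α
  induction w using FreeMonoid.inductionOn' with
  | one =>
    exact ⟨1, 1, one_mem _, one_mem _, by rw [map_one, one_mul]; rfl⟩
  | of_mul g w ih =>
    obtain ⟨γ, β, hγ, hβ, heq⟩ := ih
    rw [map_mul, heq]
    cases g with
    | sig i h =>
      have hgen : (conGen (TPMRel n)).mk' (FreeMonoid.of (TPMGen.sig i h)) = TPM.s n i := by
        rw [TPM.s, wS, dif_pos h]
      refine ⟨TPM.s n i * γ, β,
        mul_mem (Submonoid.subset_closure ⟨i, h.1, h.2, Or.inl rfl⟩) hγ, hβ, ?_⟩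
      rw [hgen, mul_assoc]; rfl
    | sigInv i h =>
      have hgen : (conGen (TPMRel n)).mk' (FreeMonoid.of (TPMGen.sigInv i h)) =
          TPM.sInv n i := by rw [TPM.sInv, wSI, dif_pos h]
      refine ⟨TPM.sInv n i * γ, β,
        mul_mem (Submonoid.subset_closure ⟨i, h.1, h.2, Or.inr (Or.inl rfl)⟩) hγ, hβ, ?_⟩
      rw [hgen, mul_assoc]; rfl
    | p i h =>
      have hgen : (conGen (TPMRel n)).mk' (FreeMonoid.of (TPMGen.p i h)) = TPM.p n i := by
        rw [TPM.p, wP, dif_pos h]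
      refine ⟨TPM.p n i * γ, β,
        mul_mem (Submonoid.subset_closure ⟨i, h.1, h.2, Or.inr (Or.inr rfl)⟩) hγ, hβ, ?_⟩
      rw [hgen, mul_assoc]; rfl
    | eta i h =>
      have hgen : (conGen (TPMRel n)).mk' (FreeMonoid.of (TPMGen.eta i h)) = TPM.e n i := by
        rw [TPM.e, wE, dif_pos h]
      have hE : TPM.e n i = TPM.genTie n i (i+1) := by
        rw [TPMAux.genTie_eq (by omega), TPMAux.Tp_base]
      have hEmem : TPM.e n i ∈ Submonoid.closure
          {x : TPM n | ∃ i j : ℕ, 1 ≤ i ∧ i < j ∧ j ≤ n ∧ x = TPM.genTie n i j} := by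
        rw [hE]
        exact Submonoid.subset_closure ⟨i, i+1, h.1, by omega, by omega, rfl⟩
      obtain ⟨β', hβ', heq'⟩ := TPMAux.slide_full hn γ hγ (TPM.e n i) hEmem
      refine ⟨γ, β' * β, hγ, mul_mem hβ' hβ, ?_⟩
      rw [hgen]
      show (TPM.e n i * (γ * β) : TPM n) = γ * (β' * β)
      rw [← mul_assoc, heq', mul_assoc]
end

section
/- Relation (ii) of the generalized-tie relations in the tied pseudo braid monoid: for every n ≥ 2 and all indices 1 ≤ i < j ≤ n−1, the equality p_j η_{i,j} = η_{i,j+1} p_j holds in the tied pseudo braid monoid TPM_n. -/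
section Aux

private lemma tpm_rel_eq {n : ℕ} {x y : FreeMonoid (TPMGen n)} (h : TPMRel n x y) :
    ((conGen (TPMRel n)).mk' x : TPM n) = (conGen (TPMRel n)).mk' y :=
  (Con.eq _).mpr (ConGen.Rel.of _ _ h)

private lemma tpm_s_sInv {n i : ℕ} (h : 1 ≤ i ∧ i ≤ n - 1) :
    TPM.s n i * TPM.sInv n i = 1 := by
  have := tpm_rel_eq (TPMRel.inv_right (n := n) i h)
  simp only [map_mul, map_one] at this
  exact this

private lemma tpm_sInv_s {n i : ℕ} (h : 1 ≤ i ∧ i ≤ n - 1) :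
    TPM.sInv n i * TPM.s n i = 1 := by
  have := tpm_rel_eq (TPMRel.inv_left (n := n) i h)
  simp only [map_mul, map_one] at this
  exact this

/-- σ_i as a unit of `TPM n`. -/
private def tpm_sU (n i : ℕ) (h : 1 ≤ i ∧ i ≤ n - 1) : (TPM n)ˣ :=
  ⟨TPM.s n i, TPM.sInv n i, tpm_s_sInv h, tpm_sInv_s h⟩

private lemma tpm_p_s_far {n k j : ℕ} (hk : 1 ≤ k ∧ k ≤ n - 1)
    (hjv : 1 ≤ j ∧ j ≤ n - 1) (hkj : k + 2 ≤ j) :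
    TPM.p n j * TPM.s n k = TPM.s n k * TPM.p n j := by
  have := tpm_rel_eq (TPMRel.p_sig_far_pos (n := n) j k hjv hk (Or.inr hkj))
  simp only [map_mul, map_one] at this
  exact this

private lemma tpm_p_sInv_far {n k j : ℕ} (hk : 1 ≤ k ∧ k ≤ n - 1)
    (hjv : 1 ≤ j ∧ j ≤ n - 1) (hkj : k + 2 ≤ j) :
    TPM.p n j * TPM.sInv n k = TPM.sInv n k * TPM.p n j := by
  have := tpm_rel_eq (TPMRel.p_sig_far_neg (n := n) j k hjv hk (Or.inr hkj))
  simp only [map_mul, map_one] at this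
  exact this

/-- Pure monoid computation underlying the core step. -/
private lemma tpm_core_calc {M : Type*} [Monoid M] (A B : Mˣ) (e f q : M)
    (hstar : e * ↑B * ↑A = ↑B * ↑A * f)
    (h3 : f * ↑A * ↑B = ↑A * ↑B * e)
    (h4 : f * ↑A * ↑B⁻¹ = ↑A * ↑B⁻¹ * e)
    (hconj : q * e = ↑B * e * ↑B⁻¹ * q) :
    q * e = ↑A * f * ↑A⁻¹ * q := by
  have hf1 : (↑B⁻¹ * e * ↑B : M) = ↑A * f * ↑A⁻¹ := by
    calc (↑B⁻¹ * e * ↑B : M) = ↑B⁻¹ * (e * ↑B * ↑A) * ↑A⁻¹ := by simp [mul_assoc]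
      _ = ↑B⁻¹ * (↑B * ↑A * f) * ↑A⁻¹ := by rw [hstar]
      _ = ↑A * f * ↑A⁻¹ := by simp [mul_assoc]
  have hf2 : (↑B * e * ↑B⁻¹ : M) = ↑A⁻¹ * f * ↑A := by
    calc (↑B * e * ↑B⁻¹ : M) = ↑A⁻¹ * (↑A * ↑B * e) * ↑B⁻¹ := by simp [mul_assoc]
      _ = ↑A⁻¹ * (f * ↑A * ↑B) * ↑B⁻¹ := by rw [← h3]
      _ = ↑A⁻¹ * f * ↑A := by simp [mul_assoc]
  have hf3 : (↑B⁻¹ * e * ↑B : M) = ↑A⁻¹ * f * ↑A := by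
    calc (↑B⁻¹ * e * ↑B : M) = ↑A⁻¹ * (↑A * ↑B⁻¹ * e) * ↑B := by simp [mul_assoc]
      _ = ↑A⁻¹ * (f * ↑A * ↑B⁻¹) * ↑B := by rw [← h4]
      _ = ↑A⁻¹ * f * ↑A := by simp [mul_assoc]
  rw [hconj, hf2, ← hf3, hf1]

/-- The core step: `p_j η_{j-1} = σ_{j-1} η_j σ_{j-1}⁻¹ p_j` for `2 ≤ j ≤ n-1`. -/
private lemma tpm_core {n j : ℕ} (hj1 : 2 ≤ j) (hj2 : j ≤ n - 1) :
    TPM.p n j * TPM.e n (j - 1) =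
      TPM.s n (j - 1) * TPM.e n j * TPM.sInv n (j - 1) * TPM.p n j := by
  have hA : 1 ≤ j - 1 ∧ j - 1 ≤ n - 1 := ⟨by omega, by omega⟩
  have hB : 1 ≤ j ∧ j ≤ n - 1 := ⟨by omega, hj2⟩
  have hj' : j = (j - 1) + 1 := by omega
  have hstar := tpm_rel_eq (TPMRel.eta_slide_pos (n := n) (j - 1) j hA hB (Or.inl hj'))
  have h3 := tpm_rel_eq (TPMRel.eta_slide_pos (n := n) j (j - 1) hB hA (Or.inr hj'))
  have h4 := tpm_rel_eq (TPMRel.eta_slide_neg (n := n) j (j - 1) hB hA (Or.inr hj'))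
  have hconj := tpm_rel_eq (TPMRel.p_eta_conj (n := n) j (j - 1) hB hA (Or.inr hj'))
  simp only [map_mul] at hstar h3 h4 hconj
  exact tpm_core_calc (tpm_sU n (j - 1) hA) (tpm_sU n j hB)
    (TPM.e n (j - 1)) (TPM.e n j) (TPM.p n j) hstar h3 h4 hconj

end Aux

/-- **Relation (ii) of the generalized-tie relations in `TPM n`**: for every n ≥ 2 and
indices 1 ≤ i < j ≤ n−1, p_j η_{i,j} = η_{i,j+1} p_j holds in `TPM n`. -/
theorem tpm_genTie_rel_ii (n : ℕ) (hn : 2 ≤ n) (i j : ℕ)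
    (hi : 1 ≤ i) (hij : i < j) (hj : j ≤ n - 1) :
    TPM.p n j * TPM.genTie n i j = TPM.genTie n i (j + 1) * TPM.p n j := by
  have hj2 : 2 ≤ j := by omega
  have hn3 : 3 ≤ n := by omega
  set p := TPM.p n j with hp
  set S := ((List.range' i (j - 1 - i)).map (TPM.s n)).prod with hS
  set T := ((List.range' i (j - 1 - i)).reverse.map (TPM.sInv n)).prod with hT
  have hmem : ∀ k ∈ List.range' i (j - 1 - i), 1 ≤ k ∧ k ≤ n - 1 ∧ k + 2 ≤ j := by
    intro k hk
    rw [List.mem_range'_1] at hk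
    omega
  have hCS : Commute p S := by
    apply Commute.list_prod_right
    intro x hx
    rw [List.mem_map] at hx
    obtain ⟨k, hk, rfl⟩ := hx
    obtain ⟨h1, h2, h3⟩ := hmem k hk
    exact tpm_p_s_far ⟨h1, h2⟩ ⟨by omega, hj⟩ h3
  have hCT : Commute p T := by
    apply Commute.list_prod_right
    intro x hx
    rw [List.mem_map] at hx
    obtain ⟨k, hk, rfl⟩ := hx
    rw [List.mem_reverse] at hk
    obtain ⟨h1, h2, h3⟩ := hmem k hk
    exact tpm_p_sInv_far ⟨h1, h2⟩ ⟨by omega, hj⟩ h3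
  have hrange : List.range' i (j + 1 - 1 - i) = List.range' i (j - 1 - i) ++ [j - 1] := by
    have h1 : j + 1 - 1 - i = (j - 1 - i) + 1 := by omega
    rw [h1, List.range'_concat]
    congr 2
    omega
  have hgt : TPM.genTie n i (j + 1) =
      S * TPM.s n (j - 1) * TPM.e n j * (TPM.sInv n (j - 1) * T) := by
    rw [TPM.genTie, hrange]
    simp only [List.map_append, List.prod_append, List.reverse_append, List.reverse_singleton,
      List.map_cons, List.prod_cons, List.map_nil, List.prod_nil, mul_one,
      List.singleton_append, Nat.add_sub_cancel]
    rfl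
  rw [hgt, TPM.genTie, ← hS, ← hT]
  have core := tpm_core (n := n) hj2 hj
  calc p * (S * TPM.e n (j - 1) * T)
      = S * (p * TPM.e n (j - 1)) * T := by
        rw [← mul_assoc, ← mul_assoc, hCS.eq]
        simp only [mul_assoc]
    _ = S * (TPM.s n (j - 1) * TPM.e n j * TPM.sInv n (j - 1) * p) * T := by rw [hp, core]
    _ = S * TPM.s n (j - 1) * TPM.e n j * (TPM.sInv n (j - 1) * T) * p := by
        simp only [mul_assoc]
        rw [hCT.eq]
end

section
/- Relation (iii) of the generalized-tie relations in the tied pseudo braid monoid: for every n ≥ 2 and all indices 2 ≤ i < j ≤ n, the equality p_{i−1} η_{i,j} = η_{i−1,j} p_{i−1} holds in the tied pseudo braid monoid TPM_n. -/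
section Helpers

variable {n : ℕ}

private lemma tpm_of_rel {a b : FreeMonoid (TPMGen n)} (h : TPMRel n a b) :
    ((conGen (TPMRel n)).mk' a : TPM n) = (conGen (TPMRel n)).mk' b :=
  (Con.eq _).2 (ConGen.Rel.of a b h)

private lemma mk_mul (a b : FreeMonoid (TPMGen n)) :
    ((conGen (TPMRel n)).mk' (a * b) : TPM n) =
      (conGen (TPMRel n)).mk' a * (conGen (TPMRel n)).mk' b :=
  map_mul _ _ _

private lemma mk_one : ((conGen (TPMRel n)).mk' (1 : FreeMonoid (TPMGen n)) : TPM n) = 1 :=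
  map_one _

private lemma s_sInv {i : ℕ} (h : 1 ≤ i ∧ i ≤ n - 1) :
    TPM.s n i * TPM.sInv n i = 1 := by
  have := tpm_of_rel (TPMRel.inv_right i h)
  rw [mk_mul, mk_one] at this
  exact this

private lemma sInv_s {i : ℕ} (h : 1 ≤ i ∧ i ≤ n - 1) :
    TPM.sInv n i * TPM.s n i = 1 := by
  have := tpm_of_rel (TPMRel.inv_left i h)
  rw [mk_mul, mk_one] at this
  exact this

/-- From `a*b = b*a` and a two-sided inverse `b'` of `b`, get `a*b' = b'*a`. -/
private lemma comm_of_inv {M : Type*} [Monoid M] {a b b' : M}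
    (h : a * b = b * a) (h1 : b * b' = 1) (h2 : b' * b = 1) : a * b' = b' * a := by
  calc a * b' = b' * b * (a * b') := by rw [h2, one_mul]
    _ = b' * (b * a) * b' := by simp [mul_assoc]
    _ = b' * (a * b) * b' := by rw [h]
    _ = b' * a * (b * b') := by simp [mul_assoc]
    _ = b' * a := by rw [h1, mul_one]

private lemma s_comm_s {i j : ℕ} (hi : 1 ≤ i ∧ i ≤ n - 1) (hj : 1 ≤ j ∧ j ≤ n - 1)
    (hij : i + 2 ≤ j ∨ j + 2 ≤ i) : TPM.s n i * TPM.s n j = TPM.s n j * TPM.s n i := by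
  have := tpm_of_rel (TPMRel.sig_comm i j hi hj hij)
  rw [mk_mul, mk_mul] at this
  exact this

private lemma s_comm_sInv {i j : ℕ} (hi : 1 ≤ i ∧ i ≤ n - 1) (hj : 1 ≤ j ∧ j ≤ n - 1)
    (hij : i + 2 ≤ j ∨ j + 2 ≤ i) : TPM.s n i * TPM.sInv n j = TPM.sInv n j * TPM.s n i :=
  comm_of_inv (s_comm_s hi hj hij) (s_sInv hj) (sInv_s hj)

private lemma sInv_comm_s {i j : ℕ} (hi : 1 ≤ i ∧ i ≤ n - 1) (hj : 1 ≤ j ∧ j ≤ n - 1)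
    (hij : i + 2 ≤ j ∨ j + 2 ≤ i) : TPM.sInv n i * TPM.s n j = TPM.s n j * TPM.sInv n i :=
  (comm_of_inv (s_comm_s hj hi hij.symm) (s_sInv hi) (sInv_s hi)).symm

private lemma sInv_comm_sInv {i j : ℕ} (hi : 1 ≤ i ∧ i ≤ n - 1) (hj : 1 ≤ j ∧ j ≤ n - 1)
    (hij : i + 2 ≤ j ∨ j + 2 ≤ i) : TPM.sInv n i * TPM.sInv n j = TPM.sInv n j * TPM.sInv n i :=
  comm_of_inv (sInv_comm_s hi hj hij) (s_sInv hj) (sInv_s hj)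

private lemma p_comm_s {i j : ℕ} (hi : 1 ≤ i ∧ i ≤ n - 1) (hj : 1 ≤ j ∧ j ≤ n - 1)
    (hij : i + 2 ≤ j ∨ j + 2 ≤ i) : TPM.p n i * TPM.s n j = TPM.s n j * TPM.p n i := by
  have := tpm_of_rel (TPMRel.p_sig_far_pos i j hi hj hij)
  rw [mk_mul, mk_mul] at this
  exact this

private lemma p_comm_sInv {i j : ℕ} (hi : 1 ≤ i ∧ i ≤ n - 1) (hj : 1 ≤ j ∧ j ≤ n - 1)
    (hij : i + 2 ≤ j ∨ j + 2 ≤ i) : TPM.p n i * TPM.sInv n j = TPM.sInv n j * TPM.p n i := by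
  have := tpm_of_rel (TPMRel.p_sig_far_neg i j hi hj hij)
  rw [mk_mul, mk_mul] at this
  exact this

/-- The slide relation `η_{j-1} σ_j σ_{j-1} = σ_j σ_{j-1} η_j` in `TPM n`. -/
private lemma eta_slide {i : ℕ} (hi : 1 ≤ i ∧ i ≤ n - 1) (hi1 : 1 ≤ i + 1 ∧ i + 1 ≤ n - 1) :
    TPM.e n i * TPM.s n (i+1) * TPM.s n i
      = TPM.s n (i+1) * TPM.s n i * TPM.e n (i+1) := by
  have := tpm_of_rel (TPMRel.eta_slide_pos i (i+1) hi hi1 (Or.inl rfl))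
  rw [mk_mul, mk_mul, mk_mul, mk_mul] at this
  exact this

/-- `σ_i η_{i+1} σ_i⁻¹ = σ_{i+1}⁻¹ η_i σ_{i+1}` in `TPM n`. -/
private lemma conj_swap {i : ℕ} (hi : 1 ≤ i ∧ i ≤ n - 1) (hi1 : 1 ≤ i + 1 ∧ i + 1 ≤ n - 1) :
    TPM.s n i * TPM.e n (i+1) * TPM.sInv n i
      = TPM.sInv n (i+1) * TPM.e n i * TPM.s n (i+1) := by
  have h := eta_slide (n := n) hi hi1
  have h2 : TPM.s n i * TPM.e n (i+1)
      = TPM.sInv n (i+1) * TPM.e n i * TPM.s n (i+1) * TPM.s n i := by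
    calc TPM.s n i * TPM.e n (i+1)
        = TPM.sInv n (i+1) * (TPM.s n (i+1) * TPM.s n i * TPM.e n (i+1)) := by
          rw [← mul_assoc, ← mul_assoc, sInv_s hi1, one_mul]
      _ = TPM.sInv n (i+1) * (TPM.e n i * TPM.s n (i+1) * TPM.s n i) := by rw [← h]
      _ = TPM.sInv n (i+1) * TPM.e n i * TPM.s n (i+1) * TPM.s n i := by
          simp [mul_assoc]
  calc TPM.s n i * TPM.e n (i+1) * TPM.sInv n i
      = TPM.sInv n (i+1) * TPM.e n i * TPM.s n (i+1) * (TPM.s n i * TPM.sInv n i) := by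
        rw [h2]; simp [mul_assoc]
    _ = TPM.sInv n (i+1) * TPM.e n i * TPM.s n (i+1) := by rw [s_sInv hi, mul_one]

private lemma p_eta_conj' {i : ℕ} (hi : 1 ≤ i ∧ i ≤ n - 1) (hi1 : 1 ≤ i + 1 ∧ i + 1 ≤ n - 1) :
    TPM.p n i * TPM.e n (i+1)
      = TPM.s n i * TPM.e n (i+1) * TPM.sInv n i * TPM.p n i := by
  have := tpm_of_rel (TPMRel.p_eta_conj i (i+1) hi hi1 (Or.inl rfl))
  rw [mk_mul, mk_mul, mk_mul, mk_mul] at this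
  exact this

/-- An element commuting with every `g k`, `k ∈ l`, commutes with the product. -/
private lemma comm_prod_map {x : TPM n} {g : ℕ → TPM n} {l : List ℕ}
    (h : ∀ k ∈ l, x * g k = g k * x) :
    x * (l.map g).prod = (l.map g).prod * x := by
  have : Commute x (l.map g).prod := by
    apply Commute.list_prod_right
    intro y hy
    rcases List.mem_map.1 hy with ⟨k, hk, rfl⟩
    exact h k hk
  exact this

private lemma mem_range'_bounds {a m k : ℕ} (h : k ∈ List.range' a m) : a ≤ k ∧ k < a + m :=
  List.mem_range'_1.1 h

private lemma genTie_base (i : ℕ) : TPM.genTie n i (i+1) = TPM.e n i := by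
  simp [TPM.genTie]

private lemma genTie_succ {i j : ℕ} (hi : 1 ≤ i) (hij : i + 1 ≤ j) (hjn : j + 1 ≤ n) :
    TPM.genTie n i (j+1) = TPM.sInv n j * TPM.genTie n i j * TPM.s n j := by
  have hjv : 1 ≤ j ∧ j ≤ n - 1 := ⟨by omega, by omega⟩
  have hj1v : 1 ≤ j - 1 ∧ j - 1 ≤ n - 1 := ⟨by omega, by omega⟩
  have hm : j + 1 - 1 - i = (j - 1 - i) + 1 := by omega
  have him : i + (j - 1 - i) = j - 1 := by omega
  have expand : TPM.genTie n i (j+1)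
      = (((List.range' i (j-1-i)).map (TPM.s n)).prod)
        * (TPM.s n (j-1) * TPM.e n j * TPM.sInv n (j-1))
        * (((List.range' i (j-1-i)).reverse.map (TPM.sInv n)).prod) := by
    unfold TPM.genTie
    rw [hm, List.range'_1_concat, him]
    simp [mul_assoc]
  have hs : TPM.s n (j-1) * TPM.e n j * TPM.sInv n (j-1)
      = TPM.sInv n j * TPM.e n (j-1) * TPM.s n j := by
    have h2 : j - 1 + 1 = j := by omega
    have := conj_swap (n := n) (i := j-1) hj1v (by rw [h2]; exact hjv)
    rw [h2] at this
    exact this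
  have cC : TPM.sInv n j * (((List.range' i (j-1-i)).map (TPM.s n)).prod)
      = (((List.range' i (j-1-i)).map (TPM.s n)).prod) * TPM.sInv n j := by
    apply comm_prod_map
    intro k hk
    have hb := mem_range'_bounds hk
    exact sInv_comm_s hjv ⟨by omega, by omega⟩ (Or.inr (by omega))
  have cD : TPM.s n j * (((List.range' i (j-1-i)).reverse.map (TPM.sInv n)).prod)
      = (((List.range' i (j-1-i)).reverse.map (TPM.sInv n)).prod) * TPM.s n j := by
    apply comm_prod_map
    intro k hk
    have hb := mem_range'_bounds (List.mem_reverse.1 hk)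
    exact s_comm_sInv hjv ⟨by omega, by omega⟩ (Or.inr (by omega))
  rw [expand]
  calc (((List.range' i (j-1-i)).map (TPM.s n)).prod)
        * (TPM.s n (j-1) * TPM.e n j * TPM.sInv n (j-1))
        * (((List.range' i (j-1-i)).reverse.map (TPM.sInv n)).prod)
      = (((List.range' i (j-1-i)).map (TPM.s n)).prod)
        * (TPM.sInv n j * TPM.e n (j-1) * TPM.s n j)
        * (((List.range' i (j-1-i)).reverse.map (TPM.sInv n)).prod) := by rw [hs]
    _ = ((((List.range' i (j-1-i)).map (TPM.s n)).prod) * TPM.sInv n j)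
        * TPM.e n (j-1)
        * (TPM.s n j * (((List.range' i (j-1-i)).reverse.map (TPM.sInv n)).prod)) := by
          simp [mul_assoc]
    _ = (TPM.sInv n j * (((List.range' i (j-1-i)).map (TPM.s n)).prod))
        * TPM.e n (j-1)
        * ((((List.range' i (j-1-i)).reverse.map (TPM.sInv n)).prod) * TPM.s n j) := by
          rw [← cC, cD]
    _ = TPM.sInv n j
        * ((((List.range' i (j-1-i)).map (TPM.s n)).prod) * TPM.e n (j-1)
            * (((List.range' i (j-1-i)).reverse.map (TPM.sInv n)).prod))
        * TPM.s n j := by simp [mul_assoc]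
    _ = TPM.sInv n j * TPM.genTie n i j * TPM.s n j := rfl

private lemma genTie_left {i j : ℕ} (hi : 2 ≤ i) (hij : i < j) :
    TPM.genTie n (i-1) j = TPM.s n (i-1) * TPM.genTie n i j * TPM.sInv n (i-1) := by
  have h1 : j - 1 - (i-1) = (j - 1 - i) + 1 := by omega
  have h2 : i - 1 + 1 = i := by omega
  unfold TPM.genTie
  rw [h1, List.range'_succ, h2]
  simp [mul_assoc]

private lemma key (hn : 2 ≤ n) {i : ℕ} (hi : 2 ≤ i) :
    ∀ j, i + 1 ≤ j → j ≤ n →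
      TPM.p n (i-1) * TPM.genTie n i j
        = TPM.s n (i-1) * TPM.genTie n i j * TPM.sInv n (i-1) * TPM.p n (i-1) := by
  intro j hij
  induction j, hij using Nat.le_induction with
  | base =>
      intro hjn
      rw [genTie_base]
      have h2 : i - 1 + 1 = i := by omega
      have := p_eta_conj' (n := n) (i := i-1) ⟨by omega, by omega⟩
        (by rw [h2]; exact ⟨by omega, by omega⟩)
      rw [h2] at this
      exact this
  | succ j hij IH =>
      intro hjn
      have hj : j ≤ n := by omega
      have IH' := IH hj
      have hi1v : 1 ≤ i - 1 ∧ i - 1 ≤ n - 1 := ⟨by omega, by omega⟩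
      have hjv : 1 ≤ j ∧ j ≤ n - 1 := ⟨by omega, by omega⟩
      have hfar : i - 1 + 2 ≤ j ∨ j + 2 ≤ i - 1 := Or.inl (by omega)
      have c1 : TPM.p n (i-1) * TPM.sInv n j = TPM.sInv n j * TPM.p n (i-1) :=
        p_comm_sInv hi1v hjv hfar
      have c2 : TPM.p n (i-1) * TPM.s n j = TPM.s n j * TPM.p n (i-1) :=
        p_comm_s hi1v hjv hfar
      have c3 : TPM.s n (i-1) * TPM.sInv n j = TPM.sInv n j * TPM.s n (i-1) :=
        s_comm_sInv hi1v hjv hfar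
      have c4 : TPM.sInv n (i-1) * TPM.s n j = TPM.s n j * TPM.sInv n (i-1) :=
        sInv_comm_s hi1v hjv hfar
      rw [genTie_succ (by omega) hij hjn]
      calc TPM.p n (i-1) * (TPM.sInv n j * TPM.genTie n i j * TPM.s n j)
          = TPM.p n (i-1) * TPM.sInv n j * TPM.genTie n i j * TPM.s n j := by
            simp [mul_assoc]
        _ = TPM.sInv n j * TPM.p n (i-1) * TPM.genTie n i j * TPM.s n j := by rw [c1]
        _ = TPM.sInv n j * (TPM.p n (i-1) * TPM.genTie n i j) * TPM.s n j := by
            rw [mul_assoc (TPM.sInv n j)]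
        _ = TPM.sInv n j
            * (TPM.s n (i-1) * TPM.genTie n i j * TPM.sInv n (i-1) * TPM.p n (i-1))
            * TPM.s n j := by rw [IH']
        _ = TPM.sInv n j * TPM.s n (i-1) * TPM.genTie n i j * TPM.sInv n (i-1)
            * (TPM.p n (i-1) * TPM.s n j) := by simp [mul_assoc]
        _ = TPM.sInv n j * TPM.s n (i-1) * TPM.genTie n i j * TPM.sInv n (i-1)
            * (TPM.s n j * TPM.p n (i-1)) := by rw [c2]
        _ = TPM.sInv n j * TPM.s n (i-1) * TPM.genTie n i j
            * (TPM.sInv n (i-1) * TPM.s n j) * TPM.p n (i-1) := by simp [mul_assoc]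
        _ = TPM.sInv n j * TPM.s n (i-1) * TPM.genTie n i j
            * (TPM.s n j * TPM.sInv n (i-1)) * TPM.p n (i-1) := by rw [c4]
        _ = (TPM.sInv n j * TPM.s n (i-1)) * (TPM.genTie n i j * TPM.s n j)
            * TPM.sInv n (i-1) * TPM.p n (i-1) := by simp [mul_assoc]
        _ = (TPM.s n (i-1) * TPM.sInv n j) * (TPM.genTie n i j * TPM.s n j)
            * TPM.sInv n (i-1) * TPM.p n (i-1) := by rw [← c3]
        _ = TPM.s n (i-1) * (TPM.sInv n j * TPM.genTie n i j * TPM.s n j)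
            * TPM.sInv n (i-1) * TPM.p n (i-1) := by simp [mul_assoc]

end Helpers

/-- **Relation (iii) of the generalized-tie relations in `TPM n`**: for every n ≥ 2 and
indices 2 ≤ i < j ≤ n, p_{i−1} η_{i,j} = η_{i−1,j} p_{i−1} holds in `TPM n`. -/
theorem tpm_genTie_rel_iii (n : ℕ) (hn : 2 ≤ n) (i j : ℕ)
    (hi : 2 ≤ i) (hij : i < j) (hj : j ≤ n) :
    TPM.p n (i - 1) * TPM.genTie n i j = TPM.genTie n (i - 1) j * TPM.p n (i - 1) := by
  rw [genTie_left hi hij, key hn hi j hij hj]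
end
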